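/- arXiv:hep-th/9411141 — 5 statements merged into one kernel-verified Lean document; each statement's English description precedes it below -/
import Mathlib

section
/- Let 1 ≤ k ≤ n and let T¹,…,Tⁿ be elements of ⋀^k V ⊗ ⋀^k V. Then the family (T^l) satisfies S T^l = T^l for all l together with the cyclic equations Σ over the cyclic permutations (l,m,r) ↦ (l,m,r), (m,r,l), (r,l,m) of [(b*_l c*_m + b*_m c*_l) T^r] = 0 for all l, m, r ∈ {1,…,n}, if and only if there exists B′ ∈ ⋀^{k−1} V ⊗ ⋀^k V such that T^l = b*_l B′ + c*_l S B′ for all l = 1,…,n. -/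
open scoped BigOperators TensorProduct

set_option maxHeartbeats 1000000
set_option synthInstance.maxHeartbeats 1000000

noncomputable section

/-- The exterior algebra `Λ` of `V = ℝ^n`. -/
abbrev ExtAlg (n : ℕ) : Type := ExteriorAlgebra ℝ (Fin n → ℝ)

/-- The Hilbert-space model `H := Λ ⊗ Λ` (as an `ℝ`-vector space). -/
abbrev Hspace (n : ℕ) : Type := TensorProduct ℝ (ExtAlg n) (ExtAlg n)

/-- The creation operator `b*_l = (e_l ∧ ·) ⊗ 1` on `H`. -/
def bstar (n : ℕ) (l : Fin n) : Hspace n →ₗ[ℝ] Hspace n :=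
  TensorProduct.map
    (LinearMap.mulLeft ℝ (ExteriorAlgebra.ι ℝ (Pi.single l 1 : Fin n → ℝ)))
    LinearMap.id

/-- The creation operator `c*_l = 1 ⊗ (e_l ∧ ·)` on `H`. -/
def cstar (n : ℕ) (l : Fin n) : Hspace n →ₗ[ℝ] Hspace n :=
  TensorProduct.map LinearMap.id
    (LinearMap.mulLeft ℝ (ExteriorAlgebra.ι ℝ (Pi.single l 1 : Fin n → ℝ)))

/-- The flip `S(x ⊗ y) = y ⊗ x` on `H`. -/
def Sflip (n : ℕ) : Hspace n →ₗ[ℝ] Hspace n :=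
  (TensorProduct.comm ℝ (ExtAlg n) (ExtAlg n)).toLinearMap

/-- The subspace `⋀^{k₁} V ⊗ ⋀^{k₂} V` of `H = Λ ⊗ Λ`. -/
def extTensorSub (n k₁ k₂ : ℕ) : Submodule ℝ (Hspace n) :=
  LinearMap.range (TensorProduct.map
    (⋀[ℝ]^k₁ (Fin n → ℝ)).subtype (⋀[ℝ]^k₂ (Fin n → ℝ)).subtype)

namespace CyclicAux

variable {n : ℕ}

/-- creation operator on one factor -/
def aW (l : Fin n) : ExtAlg n →ₗ[ℝ] ExtAlg n :=
  LinearMap.mulLeft ℝ (ExteriorAlgebra.ι ℝ (Pi.single l 1 : Fin n → ℝ))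

/-- annihilation operator on one factor -/
def dW (l : Fin n) : ExtAlg n →ₗ[ℝ] ExtAlg n :=
  CliffordAlgebra.contractLeft (LinearMap.proj l)

lemma aW_apply (l : Fin n) (x : ExtAlg n) :
    aW l x = ExteriorAlgebra.ι ℝ (Pi.single l 1 : Fin n → ℝ) * x := rfl

lemma aW_aW (l m : Fin n) (x : ExtAlg n) : aW l (aW m x) = - aW m (aW l x) := by
  have h := ExteriorAlgebra.ι_add_mul_swap (R := ℝ)
    (Pi.single l 1 : Fin n → ℝ) (Pi.single m 1)
  simp only [aW_apply, ← mul_assoc]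
  rw [eq_neg_of_add_eq_zero_left h]
  simp

lemma dW_aW (l m : Fin n) (x : ExtAlg n) :
    dW l (aW m x) = (if l = m then x else 0) - aW m (dW l x) := by
  have h := CliffordAlgebra.contractLeft_ι_mul (Q := (0 : QuadraticForm ℝ (Fin n → ℝ)))
    (d := LinearMap.proj l) (Pi.single m 1) x
  simp only [dW, aW_apply]
  rw [h]
  congr 1
  have : (LinearMap.proj l : (Fin n → ℝ) →ₗ[ℝ] ℝ) (Pi.single m (1:ℝ))
      = if l = m then (1:ℝ) else 0 := by
    simp [LinearMap.proj_apply, Pi.single_apply]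
  rw [this]
  split <;> simp

lemma dW_dW (l m : Fin n) (x : ExtAlg n) : dW l (dW m x) = - dW m (dW l x) := by
  simpa [dW] using CliffordAlgebra.contractLeft_comm (Q := (0 : QuadraticForm ℝ (Fin n → ℝ)))
    (d := LinearMap.proj l) (d' := LinearMap.proj m) x

lemma dW_zero_degree (l : Fin n) {x : ExtAlg n} (hx : x ∈ ⋀[ℝ]^0 (Fin n → ℝ)) :
    dW l x = 0 := by
  replace hx : x ∈ (LinearMap.range (ExteriorAlgebra.ι ℝ (M := Fin n → ℝ))) ^ 0 := hx
  rw [pow_zero] at hx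
  obtain ⟨r, rfl⟩ := Submodule.mem_one.mp hx
  exact CliffordAlgebra.contractLeft_algebraMap _ _ _

lemma wedge_mem (v : Fin n → ℝ) {p : ℕ} {x : ExtAlg n} (hx : x ∈ ⋀[ℝ]^p (Fin n → ℝ)) :
    ExteriorAlgebra.ι ℝ v * x ∈ ⋀[ℝ]^(p+1) (Fin n → ℝ) := by
  show _ ∈ (LinearMap.range (ExteriorAlgebra.ι ℝ (M := Fin n → ℝ))) ^ (p+1)
  rw [pow_succ']
  exact Submodule.mul_mem_mul (LinearMap.mem_range_self _ _) hx

lemma aW_mem (l : Fin n) {p : ℕ} {x : ExtAlg n} (hx : x ∈ ⋀[ℝ]^p (Fin n → ℝ)) :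
    aW l x ∈ ⋀[ℝ]^(p+1) (Fin n → ℝ) := wedge_mem _ hx

lemma dW_mem (l : Fin n) {p : ℕ} {x : ExtAlg n} (hx : x ∈ ⋀[ℝ]^p (Fin n → ℝ)) :
    dW l x ∈ ⋀[ℝ]^(p-1) (Fin n → ℝ) := by
  induction hx using Submodule.pow_induction_on_left' with
  | algebraMap r => simp [dW, CliffordAlgebra.contractLeft_algebraMap]
  | add x y i hx hy ihx ihy => rw [map_add]; exact add_mem ihx ihy
  | mem_mul m hm i x hx ih =>
      obtain ⟨v, rfl⟩ := hm
      have key : dW l ((ExteriorAlgebra.ι ℝ v) * x)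
          = (v l) • x - (ExteriorAlgebra.ι ℝ v) * dW l x := by
        simpa [dW] using CliffordAlgebra.contractLeft_ι_mul
          (Q := (0 : QuadraticForm ℝ (Fin n → ℝ))) (d := LinearMap.proj l) v x
      rw [key]
      cases i with
      | zero =>
          have : dW l x = 0 := dW_zero_degree l hx
          rw [this, mul_zero, sub_zero]
          exact Submodule.smul_mem _ _ hx
      | succ i =>
          refine sub_mem (Submodule.smul_mem _ _ hx) ?_
          have h2 : dW l x ∈ ⋀[ℝ]^i (Fin n → ℝ) := by
            simpa using ih
          simpa using wedge_mem v h2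

lemma sum_single_ι (v : Fin n → ℝ) :
    ∑ l, v l • ExteriorAlgebra.ι ℝ (Pi.single l 1 : Fin n → ℝ) = ExteriorAlgebra.ι ℝ v := by
  simp_rw [← map_smul, ← map_sum]
  congr 1
  simp_rw [← Pi.single_smul]
  simp [Finset.univ_sum_single]

lemma sum_aW_dW {p : ℕ} {x : ExtAlg n} (hx : x ∈ ⋀[ℝ]^p (Fin n → ℝ)) :
    ∑ l, aW l (dW l x) = (p : ℝ) • x := by
  induction hx using Submodule.pow_induction_on_left' with
  | algebraMap r =>
      have : ∀ l : Fin n, dW l (algebraMap ℝ (ExtAlg n) r) = 0 := fun l =>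
        CliffordAlgebra.contractLeft_algebraMap _ _ _
      simp [this]
  | add x y i hx hy ihx ihy =>
      simp only [map_add, Finset.sum_add_distrib, ihx, ihy, smul_add]
  | mem_mul m hm i x hx ih =>
      obtain ⟨v, rfl⟩ := hm
      have key : ∀ l, dW l ((ExteriorAlgebra.ι ℝ v) * x)
          = (v l) • x - (ExteriorAlgebra.ι ℝ v) * dW l x := fun l => by
        simpa [dW] using CliffordAlgebra.contractLeft_ι_mul
          (Q := (0 : QuadraticForm ℝ (Fin n → ℝ))) (d := LinearMap.proj l) v x
      have key2 : ∀ l (y : ExtAlg n), aW l ((ExteriorAlgebra.ι ℝ v) * y)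
          = - ((ExteriorAlgebra.ι ℝ v) * aW l y) := fun l y => by
        rw [aW_apply, aW_apply, ← mul_assoc, ← mul_assoc,
          eq_neg_of_add_eq_zero_left (ExteriorAlgebra.ι_add_mul_swap _ _)]
        simp
      have step : ∀ l, aW l (dW l ((ExteriorAlgebra.ι ℝ v) * x))
          = v l • aW l x + (ExteriorAlgebra.ι ℝ v) * aW l (dW l x) := fun l => by
        rw [key l, map_sub, map_smul, key2 l (dW l x), sub_neg_eq_add]
      rw [Finset.sum_congr rfl fun l _ => step l, Finset.sum_add_distrib]
      have e1 : ∑ l, v l • aW l x = (ExteriorAlgebra.ι ℝ v) * x := by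
        simp_rw [aW_apply, ← smul_mul_assoc, ← Finset.sum_mul, sum_single_ι]
      have e2 : ∑ l, (ExteriorAlgebra.ι ℝ v) * aW l (dW l x)
          = (i : ℝ) • ((ExteriorAlgebra.ι ℝ v) * x) := by
        rw [← Finset.mul_sum, ih, mul_smul_comm]
      rw [e1, e2]
      push_cast
      rw [add_smul, one_smul]
      abel

lemma sum_dW_aW {p : ℕ} {x : ExtAlg n} (hx : x ∈ ⋀[ℝ]^p (Fin n → ℝ)) :
    ∑ l, dW l (aW l x) = ((n : ℝ) - p) • x := by
  have : ∀ l : Fin n, dW l (aW l x) = x - aW l (dW l x) := fun l => by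
    rw [dW_aW, if_pos rfl]
  rw [Finset.sum_congr rfl fun l _ => this l, Finset.sum_sub_distrib, sum_aW_dW hx]
  rw [Finset.sum_const, Finset.card_univ, Fintype.card_fin, sub_smul,
    Nat.cast_smul_eq_nsmul]
  simp [Nat.cast_smul_eq_nsmul]

lemma top_zero {x : ExtAlg n} (hx : x ∈ ⋀[ℝ]^(n+1) (Fin n → ℝ)) : x = 0 := by
  have hspan := ExteriorAlgebra.ιMulti_span_fixedDegree ℝ (M := Fin n → ℝ) (n+1)
  rw [← hspan] at hx
  have hz : ∀ y ∈ Set.range (ExteriorAlgebra.ιMulti ℝ (n+1) (M := Fin n → ℝ)), y = 0 := by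
    rintro y ⟨v, rfl⟩
    apply AlternatingMap.map_linearDependent
    intro h
    have := h.fintype_card_le_finrank
    simp [Module.finrank_pi] at this
  induction hx using Submodule.span_induction with
  | mem y hy => exact hz y hy
  | zero => rfl
  | add a b _ _ iha ihb => rw [iha, ihb, add_zero]
  | smul r a _ iha => rw [iha, smul_zero]


/-! ### Operators on `H` -/

def bb (l : Fin n) : Hspace n →ₗ[ℝ] Hspace n := TensorProduct.map (dW l) LinearMap.id

def cc (l : Fin n) : Hspace n →ₗ[ℝ] Hspace n := TensorProduct.map LinearMap.id (dW l)

lemma bstar_eq (l : Fin n) : bstar n l = TensorProduct.map (aW l) LinearMap.id := rfl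
lemma cstar_eq (l : Fin n) : cstar n l = TensorProduct.map LinearMap.id (aW l) := rfl

lemma bstar_tmul (l : Fin n) (a b : ExtAlg n) :
    bstar n l (a ⊗ₜ[ℝ] b) = aW l a ⊗ₜ[ℝ] b := rfl
lemma cstar_tmul (l : Fin n) (a b : ExtAlg n) :
    cstar n l (a ⊗ₜ[ℝ] b) = a ⊗ₜ[ℝ] aW l b := rfl
lemma bb_tmul (l : Fin n) (a b : ExtAlg n) :
    bb l (a ⊗ₜ[ℝ] b) = dW l a ⊗ₜ[ℝ] b := rfl
lemma cc_tmul (l : Fin n) (a b : ExtAlg n) :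
    cc l (a ⊗ₜ[ℝ] b) = a ⊗ₜ[ℝ] dW l b := rfl
lemma Sflip_tmul (a b : ExtAlg n) : Sflip n (a ⊗ₜ[ℝ] b) = b ⊗ₜ[ℝ] a := rfl

lemma bstar_cstar (l m : Fin n) (x : Hspace n) :
    bstar n l (cstar n m x) = cstar n m (bstar n l x) := by
  induction x using TensorProduct.induction_on with
  | zero => simp
  | tmul a b => rfl
  | add u v ih ih' => simp only [map_add, ih, ih']

lemma bb_cstar (l m : Fin n) (x : Hspace n) :
    bb l (cstar n m x) = cstar n m (bb l x) := by
  induction x using TensorProduct.induction_on with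
  | zero => simp
  | tmul a b => rfl
  | add u v ih ih' => simp only [map_add, ih, ih']

lemma cc_bstar (l m : Fin n) (x : Hspace n) :
    cc l (bstar n m x) = bstar n m (cc l x) := by
  induction x using TensorProduct.induction_on with
  | zero => simp
  | tmul a b => rfl
  | add u v ih ih' => simp only [map_add, ih, ih']

lemma bb_cc (l m : Fin n) (x : Hspace n) :
    bb l (cc m x) = cc m (bb l x) := by
  induction x using TensorProduct.induction_on with
  | zero => simp
  | tmul a b => rfl
  | add u v ih ih' => simp only [map_add, ih, ih']

lemma bstar_bstar (l m : Fin n) (x : Hspace n) :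
    bstar n l (bstar n m x) = - bstar n m (bstar n l x) := by
  induction x using TensorProduct.induction_on with
  | zero => simp
  | tmul a b =>
      rw [bstar_tmul, bstar_tmul, aW_aW l m a, bstar_tmul, bstar_tmul, TensorProduct.neg_tmul]
  | add u v ih ih' => simp only [map_add, ih, ih', neg_add]

lemma cstar_cstar (l m : Fin n) (x : Hspace n) :
    cstar n l (cstar n m x) = - cstar n m (cstar n l x) := by
  induction x using TensorProduct.induction_on with
  | zero => simp
  | tmul a b =>
      rw [cstar_tmul, cstar_tmul, aW_aW l m b, cstar_tmul, cstar_tmul, TensorProduct.tmul_neg]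
  | add u v ih ih' => simp only [map_add, ih, ih', neg_add]

lemma bb_bstar (l m : Fin n) (x : Hspace n) :
    bb l (bstar n m x) = (if l = m then x else 0) - bstar n m (bb l x) := by
  induction x using TensorProduct.induction_on with
  | zero => simp
  | tmul a b =>
      rw [bstar_tmul, bb_tmul, dW_aW l m a, bb_tmul, bstar_tmul, TensorProduct.sub_tmul,
        TensorProduct.ite_tmul]
  | add u v ih ih' =>
      rw [map_add, map_add, ih, ih', map_add, map_add]
      split <;> abel

lemma cc_cstar (l m : Fin n) (x : Hspace n) :
    cc l (cstar n m x) = (if l = m then x else 0) - cstar n m (cc l x) := by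
  induction x using TensorProduct.induction_on with
  | zero => simp
  | tmul a b =>
      rw [cstar_tmul, cc_tmul, dW_aW l m b, cc_tmul, cstar_tmul, TensorProduct.tmul_sub,
        TensorProduct.tmul_ite]
  | add u v ih ih' =>
      rw [map_add, map_add, ih, ih', map_add, map_add]
      split <;> abel

lemma Sflip_Sflip (x : Hspace n) : Sflip n (Sflip n x) = x := by
  induction x using TensorProduct.induction_on with
  | zero => simp
  | tmul a b => rfl
  | add u v ih ih' => simp only [map_add, ih, ih']

lemma Sflip_bstar (l : Fin n) (x : Hspace n) :
    Sflip n (bstar n l x) = cstar n l (Sflip n x) := by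
  induction x using TensorProduct.induction_on with
  | zero => simp
  | tmul a b => rfl
  | add u v ih ih' => simp only [map_add, ih, ih']

lemma Sflip_cstar (l : Fin n) (x : Hspace n) :
    Sflip n (cstar n l x) = bstar n l (Sflip n x) := by
  induction x using TensorProduct.induction_on with
  | zero => simp
  | tmul a b => rfl
  | add u v ih ih' => simp only [map_add, ih, ih']

lemma Sflip_bb (l : Fin n) (x : Hspace n) :
    Sflip n (bb l x) = cc l (Sflip n x) := by
  induction x using TensorProduct.induction_on with
  | zero => simp
  | tmul a b => rfl
  | add u v ih ih' => simp only [map_add, ih, ih']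

lemma Sflip_cc (l : Fin n) (x : Hspace n) :
    Sflip n (cc l x) = bb l (Sflip n x) := by
  induction x using TensorProduct.induction_on with
  | zero => simp
  | tmul a b => rfl
  | add u v ih ih' => simp only [map_add, ih, ih']

/-! ### Membership -/

lemma mem_E_tmul {p q : ℕ} {a b : ExtAlg n} (ha : a ∈ ⋀[ℝ]^p (Fin n → ℝ))
    (hb : b ∈ ⋀[ℝ]^q (Fin n → ℝ)) : a ⊗ₜ[ℝ] b ∈ extTensorSub n p q :=
  ⟨(⟨a, ha⟩ : ⋀[ℝ]^p (Fin n → ℝ)) ⊗ₜ[ℝ] (⟨b, hb⟩ : ⋀[ℝ]^q (Fin n → ℝ)), rfl⟩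

lemma E_induction {p q : ℕ} {P : Hspace n → Prop} (h0 : P 0)
    (hadd : ∀ u v, P u → P v → P (u + v))
    (htmul : ∀ a b, a ∈ ⋀[ℝ]^p (Fin n → ℝ) → b ∈ ⋀[ℝ]^q (Fin n → ℝ) → P (a ⊗ₜ[ℝ] b))
    {x : Hspace n} (hx : x ∈ extTensorSub n p q) : P x := by
  obtain ⟨y, rfl⟩ := hx
  induction y using TensorProduct.induction_on with
  | zero => simpa using h0
  | tmul a b => exact htmul a.1 b.1 a.2 b.2
  | add u v ih ih' => rw [map_add]; exact hadd _ _ ih ih'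

lemma bstar_mem {p q : ℕ} (l : Fin n) {x : Hspace n} (hx : x ∈ extTensorSub n p q) :
    bstar n l x ∈ extTensorSub n (p+1) q := by
  refine E_induction (P := fun y => bstar n l y ∈ extTensorSub n (p+1) q)
    ?_ ?_ ?_ hx
  · show bstar n l 0 ∈ _; simp
  · intro u v hu hv
    show bstar n l (u + v) ∈ _
    rw [map_add]; exact add_mem hu hv
  · intro a b ha hb
    show bstar n l (a ⊗ₜ[ℝ] b) ∈ _
    rw [bstar_tmul]; exact mem_E_tmul (aW_mem l ha) hb

lemma cstar_mem {p q : ℕ} (l : Fin n) {x : Hspace n} (hx : x ∈ extTensorSub n p q) :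
    cstar n l x ∈ extTensorSub n p (q+1) := by
  refine E_induction (P := fun y => cstar n l y ∈ extTensorSub n p (q+1)) ?_ ?_ ?_ hx
  · show cstar n l 0 ∈ _; simp
  · intro u v hu hv
    show cstar n l (u + v) ∈ _
    rw [map_add]; exact add_mem hu hv
  · intro a b ha hb
    show cstar n l (a ⊗ₜ[ℝ] b) ∈ _
    rw [cstar_tmul]; exact mem_E_tmul ha (aW_mem l hb)

lemma bb_mem {p q : ℕ} (l : Fin n) {x : Hspace n} (hx : x ∈ extTensorSub n p q) :
    bb l x ∈ extTensorSub n (p-1) q := by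
  refine E_induction (P := fun y => bb l y ∈ extTensorSub n (p-1) q) ?_ ?_ ?_ hx
  · show bb l 0 ∈ _; simp
  · intro u v hu hv
    show bb l (u + v) ∈ _
    rw [map_add]; exact add_mem hu hv
  · intro a b ha hb
    show bb l (a ⊗ₜ[ℝ] b) ∈ _
    rw [bb_tmul]; exact mem_E_tmul (dW_mem l ha) hb

lemma cc_mem {p q : ℕ} (l : Fin n) {x : Hspace n} (hx : x ∈ extTensorSub n p q) :
    cc l x ∈ extTensorSub n p (q-1) := by
  refine E_induction (P := fun y => cc l y ∈ extTensorSub n p (q-1)) ?_ ?_ ?_ hx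
  · show cc l 0 ∈ _; simp
  · intro u v hu hv
    show cc l (u + v) ∈ _
    rw [map_add]; exact add_mem hu hv
  · intro a b ha hb
    show cc l (a ⊗ₜ[ℝ] b) ∈ _
    rw [cc_tmul]; exact mem_E_tmul ha (dW_mem l hb)

lemma Sflip_mem {p q : ℕ} {x : Hspace n} (hx : x ∈ extTensorSub n p q) :
    Sflip n x ∈ extTensorSub n q p := by
  refine E_induction (P := fun y => Sflip n y ∈ extTensorSub n q p) ?_ ?_ ?_ hx
  · show Sflip n 0 ∈ _; simp
  · intro u v hu hv
    show Sflip n (u + v) ∈ _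
    rw [map_add]; exact add_mem hu hv
  · intro a b ha hb
    show Sflip n (a ⊗ₜ[ℝ] b) ∈ _
    rw [Sflip_tmul]; exact mem_E_tmul hb ha

lemma cc_zero_degree (l : Fin n) {p : ℕ} {x : Hspace n} (hx : x ∈ extTensorSub n p 0) :
    cc l x = 0 := by
  refine E_induction (P := fun y => cc l y = 0) ?_ ?_ ?_ hx
  · show cc l 0 = 0; simp
  · intro u v hu hv
    show cc l (u + v) = 0
    rw [map_add, hu, hv, add_zero]
  · intro a b ha hb
    show cc l (a ⊗ₜ[ℝ] b) = 0
    rw [cc_tmul, dW_zero_degree l hb, TensorProduct.tmul_zero]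

lemma ext_top_eq_bot (p : ℕ) (hp : n + 1 ≤ p) : ⋀[ℝ]^p (Fin n → ℝ) = ⊥ := by
  obtain ⟨d, rfl⟩ : ∃ d, p = (n+1) + d := ⟨p - (n+1), by omega⟩
  have h1 : (LinearMap.range (ExteriorAlgebra.ι ℝ (M := Fin n → ℝ))) ^ (n+1) = ⊥ := by
    rw [eq_bot_iff]
    intro x hx
    rw [Submodule.mem_bot]
    exact top_zero hx
  show (LinearMap.range (ExteriorAlgebra.ι ℝ (M := Fin n → ℝ))) ^ (n+1+d) = ⊥
  rw [pow_add, h1, Submodule.bot_mul]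

lemma E_top_zero {p q : ℕ} (hp : n + 1 ≤ p) {x : Hspace n} (hx : x ∈ extTensorSub n p q) :
    x = 0 := by
  refine E_induction (P := fun y => y = (0 : Hspace n)) rfl ?_ ?_ hx
  · intro u v hu hv
    show u + v = 0
    rw [hu, hv, add_zero]
  · intro a b ha hb
    show a ⊗ₜ[ℝ] b = 0
    rw [ext_top_eq_bot p hp] at ha
    rw [(Submodule.mem_bot ℝ).mp ha, TensorProduct.zero_tmul]

lemma sum_bstar_bb {p q : ℕ} {x : Hspace n} (hx : x ∈ extTensorSub n p q) :
    ∑ l, bstar n l (bb l x) = (p : ℝ) • x := by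
  refine E_induction (P := fun y => ∑ l, bstar n l (bb l y) = (p : ℝ) • y) ?_ ?_ ?_ hx
  · show ∑ l, bstar n l (bb l (0:Hspace n)) = (p : ℝ) • (0:Hspace n); simp
  · intro u v hu hv
    show ∑ l, bstar n l (bb l (u + v)) = (p : ℝ) • (u + v)
    simp only [map_add, Finset.sum_add_distrib, hu, hv, smul_add]
  · intro a b ha hb
    show ∑ l, bstar n l (bb l (a ⊗ₜ[ℝ] b)) = (p : ℝ) • (a ⊗ₜ[ℝ] b)
    have e : ∀ l, bstar n l (bb l (a ⊗ₜ[ℝ] b)) = (aW l (dW l a)) ⊗ₜ[ℝ] b := fun l => rfl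
    rw [Finset.sum_congr rfl fun l _ => e l, ← TensorProduct.sum_tmul, sum_aW_dW ha,
      TensorProduct.smul_tmul']

lemma sum_bb_bstar {p q : ℕ} {x : Hspace n} (hx : x ∈ extTensorSub n p q) :
    ∑ l, bb l (bstar n l x) = ((n : ℝ) - p) • x := by
  refine E_induction (P := fun y => ∑ l, bb l (bstar n l y) = ((n : ℝ) - p) • y) ?_ ?_ ?_ hx
  · show ∑ l, bb l (bstar n l (0:Hspace n)) = ((n : ℝ) - p) • (0:Hspace n); simp
  · intro u v hu hv
    show ∑ l, bb l (bstar n l (u + v)) = ((n : ℝ) - p) • (u + v)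
    simp only [map_add, Finset.sum_add_distrib, hu, hv, smul_add]
  · intro a b ha hb
    show ∑ l, bb l (bstar n l (a ⊗ₜ[ℝ] b)) = ((n : ℝ) - p) • (a ⊗ₜ[ℝ] b)
    have e : ∀ l, bb l (bstar n l (a ⊗ₜ[ℝ] b)) = (dW l (aW l a)) ⊗ₜ[ℝ] b := fun l => rfl
    rw [Finset.sum_congr rfl fun l _ => e l, ← TensorProduct.sum_tmul, sum_dW_aW ha,
      TensorProduct.smul_tmul']

lemma sum_cstar_cc {p q : ℕ} {x : Hspace n} (hx : x ∈ extTensorSub n p q) :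
    ∑ l, cstar n l (cc l x) = (q : ℝ) • x := by
  refine E_induction (P := fun y => ∑ l, cstar n l (cc l y) = (q : ℝ) • y) ?_ ?_ ?_ hx
  · show ∑ l, cstar n l (cc l (0:Hspace n)) = (q : ℝ) • (0:Hspace n); simp
  · intro u v hu hv
    show ∑ l, cstar n l (cc l (u + v)) = (q : ℝ) • (u + v)
    simp only [map_add, Finset.sum_add_distrib, hu, hv, smul_add]
  · intro a b ha hb
    show ∑ l, cstar n l (cc l (a ⊗ₜ[ℝ] b)) = (q : ℝ) • (a ⊗ₜ[ℝ] b)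
    have e : ∀ l, cstar n l (cc l (a ⊗ₜ[ℝ] b)) = a ⊗ₜ[ℝ] (aW l (dW l b)) := fun l => rfl
    rw [Finset.sum_congr rfl fun l _ => e l, ← TensorProduct.tmul_sum, sum_aW_dW hb,
      TensorProduct.tmul_smul]

lemma sum_cc_cstar {p q : ℕ} {x : Hspace n} (hx : x ∈ extTensorSub n p q) :
    ∑ l, cc l (cstar n l x) = ((n : ℝ) - q) • x := by
  refine E_induction (P := fun y => ∑ l, cc l (cstar n l y) = ((n : ℝ) - q) • y) ?_ ?_ ?_ hx
  · show ∑ l, cc l (cstar n l (0:Hspace n)) = ((n : ℝ) - q) • (0:Hspace n); simp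
  · intro u v hu hv
    show ∑ l, cc l (cstar n l (u + v)) = ((n : ℝ) - q) • (u + v)
    simp only [map_add, Finset.sum_add_distrib, hu, hv, smul_add]
  · intro a b ha hb
    show ∑ l, cc l (cstar n l (a ⊗ₜ[ℝ] b)) = ((n : ℝ) - q) • (a ⊗ₜ[ℝ] b)
    have e : ∀ l, cc l (cstar n l (a ⊗ₜ[ℝ] b)) = a ⊗ₜ[ℝ] (dW l (aW l b)) := fun l => rfl
    rw [Finset.sum_congr rfl fun l _ => e l, ← TensorProduct.tmul_sum, sum_dW_aW hb,
      TensorProduct.tmul_smul]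

/-! ### The sl2 raising/lowering operators -/

def Gop : Hspace n →ₗ[ℝ] Hspace n := ∑ m, (bstar n m) ∘ₗ (cc m)

def Gop' : Hspace n →ₗ[ℝ] Hspace n := ∑ l, (cstar n l) ∘ₗ (bb l)

lemma Gop_apply (x : Hspace n) : Gop x = ∑ m, bstar n m (cc m x) := by
  simp [Gop, LinearMap.sum_apply]

lemma Gop'_apply (x : Hspace n) : Gop' x = ∑ l, cstar n l (bb l x) := by
  simp [Gop', LinearMap.sum_apply]

lemma sum_if (l : Fin n) (f : Fin n → Hspace n) :
    ∑ m, (if m = l then f m else 0) = f l := by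
  rw [Finset.sum_ite_eq' Finset.univ l f, if_pos (Finset.mem_univ l)]

lemma G_bstar (l : Fin n) (x : Hspace n) : Gop (bstar n l x) = - bstar n l (Gop x) := by
  rw [Gop_apply, Gop_apply]
  have e : ∀ m : Fin n, bstar n m (cc m (bstar n l x)) = - bstar n l (bstar n m (cc m x)) :=
    fun m => by rw [cc_bstar, bstar_bstar]
  rw [Finset.sum_congr rfl fun m _ => e m, Finset.sum_neg_distrib, ← map_sum]

lemma G_cstar (l : Fin n) (x : Hspace n) :
    Gop (cstar n l x) = bstar n l x - cstar n l (Gop x) := by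
  rw [Gop_apply, Gop_apply]
  have e : ∀ m : Fin n, bstar n m (cc m (cstar n l x))
      = (if m = l then bstar n m x else 0) - cstar n l (bstar n m (cc m x)) := fun m => by
    rw [cc_cstar, map_sub, bstar_cstar, apply_ite (⇑(bstar n m)), map_zero]
  rw [Finset.sum_congr rfl fun m _ => e m, Finset.sum_sub_distrib, sum_if, ← map_sum]

lemma G'_cstar (l : Fin n) (x : Hspace n) : Gop' (cstar n l x) = - cstar n l (Gop' x) := by
  rw [Gop'_apply, Gop'_apply]
  have e : ∀ m : Fin n, cstar n m (bb m (cstar n l x)) = - cstar n l (cstar n m (bb m x)) :=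
    fun m => by rw [bb_cstar, cstar_cstar]
  rw [Finset.sum_congr rfl fun m _ => e m, Finset.sum_neg_distrib, ← map_sum]

lemma G'_bstar (l : Fin n) (x : Hspace n) :
    Gop' (bstar n l x) = cstar n l x - bstar n l (Gop' x) := by
  rw [Gop'_apply, Gop'_apply]
  have e : ∀ m : Fin n, cstar n m (bb m (bstar n l x))
      = (if m = l then cstar n m x else 0) - bstar n l (cstar n m (bb m x)) := fun m => by
    rw [bb_bstar, map_sub, ← bstar_cstar, apply_ite (⇑(cstar n m)), map_zero]
  rw [Finset.sum_congr rfl fun m _ => e m, Finset.sum_sub_distrib, sum_if, ← map_sum]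

lemma bb_G (l : Fin n) (x : Hspace n) : bb l (Gop x) = cc l x - Gop (bb l x) := by
  rw [Gop_apply, map_sum, Gop_apply]
  have e : ∀ m : Fin n, bb l (bstar n m (cc m x))
      = (if l = m then cc m x else 0) - bstar n m (cc m (bb l x)) := fun m => by
    rw [bb_bstar, bb_cc]
  rw [Finset.sum_congr rfl fun m _ => e m, Finset.sum_sub_distrib]
  congr 1
  have : ∀ m : Fin n, (if l = m then cc m x else 0) = (if m = l then cc m x else 0) :=
    fun m => by by_cases h : l = m <;> simp [h, eq_comm, Ne.symm]
  rw [Finset.sum_congr rfl fun m _ => this m, sum_if]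

lemma G_zero_degree {p : ℕ} {x : Hspace n} (hx : x ∈ extTensorSub n p 0) : Gop x = 0 := by
  rw [Gop_apply]
  refine Finset.sum_eq_zero fun m _ => ?_
  rw [cc_zero_degree m hx, map_zero]

lemma G_mem {p q : ℕ} {x : Hspace n} (hx : x ∈ extTensorSub n p q) :
    Gop x ∈ extTensorSub n (p+1) (q-1) := by
  cases q with
  | zero => rw [G_zero_degree hx]; exact zero_mem _
  | succ q =>
      rw [Gop_apply]
      exact Submodule.sum_mem _ fun m _ => bstar_mem m (cc_mem m hx)

lemma G'_mem {p q : ℕ} {x : Hspace n} (hx : x ∈ extTensorSub n p q) :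
    Gop' x ∈ extTensorSub n (p-1) (q+1) := by
  rw [Gop'_apply]
  exact Submodule.sum_mem _ fun m _ => cstar_mem m (bb_mem m hx)

/-! ### Powers of G and main quantities -/

def Gpow : ℕ → (Hspace n →ₗ[ℝ] Hspace n)
  | 0 => LinearMap.id
  | j+1 => Gop ∘ₗ Gpow j

@[simp] lemma Gpow_zero_apply (x : Hspace n) : Gpow 0 x = x := rfl
lemma Gpow_succ_apply (j : ℕ) (x : Hspace n) : Gpow (j+1) x = Gop (Gpow j x) := rfl

lemma Gpow_mem {p q : ℕ} (j : ℕ) {x : Hspace n} (hx : x ∈ extTensorSub n p q) :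
    Gpow j x ∈ extTensorSub n (p+j) (q-j) := by
  induction j with
  | zero => simpa using hx
  | succ j ih =>
      have := G_mem ih
      have e1 : p + j + 1 = p + (j+1) := by omega
      have e2 : q - j - 1 = q - (j+1) := by omega
      rw [e1, e2] at this
      exact this

section MainDerivation

variable {k : ℕ} (T : Fin n → Hspace n)

/-- `V = Σ c_m T^m`. -/
def VT : Hspace n := ∑ m, cc m (T m)

/-- `u_j = Σ b_l G^j T^l`. -/
def uT (j : ℕ) : Hspace n := ∑ l, bb l (Gpow j (T l))

variable (hmem : ∀ l, T l ∈ extTensorSub n k k)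

include hmem

lemma VT_mem : VT T ∈ extTensorSub n k (k-1) :=
  Submodule.sum_mem _ fun m _ => cc_mem m (hmem m)

lemma Tj_mem (j : ℕ) (r : Fin n) : Gpow j (T r) ∈ extTensorSub n (k+j) (k-j) :=
  Gpow_mem j (hmem r)

lemma Tj_zero {j : ℕ} (hj : k + 1 ≤ j) (r : Fin n) : Gpow j (T r) = 0 := by
  obtain ⟨d, rfl⟩ : ∃ d, j = (k+1) + d := ⟨j - (k+1), by omega⟩
  induction d with
  | zero =>
      rw [Gpow_succ_apply]
      exact G_zero_degree (by simpa using Tj_mem T hmem k r)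
  | succ d ih =>
      have e : k + 1 + (d + 1) = (k + 1 + d) + 1 := by omega
      rw [e, Gpow_succ_apply, ih (by omega), map_zero]

lemma Vj_mem (j : ℕ) : Gpow j (VT T) ∈ extTensorSub n (k+j) (k-1-j) :=
  Gpow_mem j (VT_mem T hmem)

lemma Vj_zero (hk1 : 1 ≤ k) {j : ℕ} (hj : k ≤ j) : Gpow j (VT T) = 0 := by
  obtain ⟨d, rfl⟩ : ∃ d, j = k + d := ⟨j - k, by omega⟩
  induction d with
  | zero =>
      obtain ⟨k', rfl⟩ : ∃ k', k = k' + 1 := ⟨k - 1, by omega⟩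
      rw [Nat.add_zero, Gpow_succ_apply]
      refine G_zero_degree (p := k' + 1 + k') ?_
      have := Vj_mem T hmem k'
      have e : k' + 1 - 1 - k' = 0 := by omega
      rw [e] at this
      exact this
  | succ d ih =>
      have e : k + (d + 1) = (k + d) + 1 := by omega
      rw [e, Gpow_succ_apply, ih (by omega), map_zero]

lemma uT_mem (hk1 : 1 ≤ k) (j : ℕ) : uT T j ∈ extTensorSub n (k-1+j) (k-j) := by
  have : uT T j ∈ extTensorSub n (k+j-1) (k-j) :=
    Submodule.sum_mem _ fun l _ => bb_mem l (Tj_mem T hmem j l)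
  have e : k + j - 1 = k - 1 + j := by omega
  rwa [e] at this

lemma uT_zero {j : ℕ} (hj : k + 1 ≤ j) : uT T j = 0 := by
  refine Finset.sum_eq_zero fun l _ => ?_
  rw [Tj_zero T hmem hj, map_zero]

variable (hcyc : ∀ l m r : Fin n,
    (bstar n l (cstar n m (T r)) + bstar n m (cstar n l (T r))) +
      (bstar n m (cstar n r (T l)) + bstar n r (cstar n m (T l))) +
      (bstar n r (cstar n l (T m)) + bstar n l (cstar n r (T m))) = 0)

include hcyc

/-- The once-contracted cyclic identity `(C0)`. -/
lemma C0 (l r : Fin n) :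
    cstar n l (Gop (T r)) + cstar n r (Gop (T l))
      = ((n:ℝ) - k + 2) • (bstar n l (T r) + bstar n r (T l))
        - (bstar n r (cstar n l (VT T)) + bstar n l (cstar n r (VT T))) := by
  -- three helper computations
  have H1 : ∀ a b : Fin n, ∑ m, cc m (bstar n a (cstar n m (T b)))
      = ((n:ℝ) - k) • bstar n a (T b) := by
    intro a b
    have e : ∀ m : Fin n, cc m (bstar n a (cstar n m (T b)))
        = bstar n a (cc m (cstar n m (T b))) := fun m => cc_bstar m a _
    rw [Finset.sum_congr rfl fun m _ => e m, ← map_sum, sum_cc_cstar (hmem b), map_smul]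
  have H2 : ∀ a b : Fin n, ∑ m, cc m (bstar n m (cstar n a (T b)))
      = bstar n a (T b) - cstar n a (Gop (T b)) := by
    intro a b
    have e : ∀ m : Fin n, cc m (bstar n m (cstar n a (T b)))
        = (if m = a then bstar n m (T b) else 0)
          - cstar n a (bstar n m (cc m (T b))) := fun m => by
      rw [cc_bstar, cc_cstar, map_sub, apply_ite (⇑(bstar n m)), map_zero, bstar_cstar]
    rw [Finset.sum_congr rfl fun m _ => e m, Finset.sum_sub_distrib, sum_if, ← map_sum,
      ← Gop_apply]
  have H3 : ∀ a b : Fin n, ∑ m, cc m (bstar n a (cstar n b (T m)))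
      = bstar n a (T b) - bstar n a (cstar n b (VT T)) := by
    intro a b
    have e : ∀ m : Fin n, cc m (bstar n a (cstar n b (T m)))
        = (if m = b then bstar n a (T m) else 0)
          - bstar n a (cstar n b (cc m (T m))) := fun m => by
      rw [cc_bstar, cc_cstar, map_sub, apply_ite (⇑(bstar n a)), map_zero]
    rw [Finset.sum_congr rfl fun m _ => e m, Finset.sum_sub_distrib, sum_if, ← map_sum,
      ← map_sum, ← VT]
  have hsum : ∑ m, cc m ((bstar n l (cstar n m (T r)) + bstar n m (cstar n l (T r))) +
      (bstar n m (cstar n r (T l)) + bstar n r (cstar n m (T l))) +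
      (bstar n r (cstar n l (T m)) + bstar n l (cstar n r (T m)))) = 0 :=
    Finset.sum_eq_zero fun m _ => by rw [hcyc l m r, map_zero]
  have hexp : ∑ m, cc m ((bstar n l (cstar n m (T r)) + bstar n m (cstar n l (T r))) +
      (bstar n m (cstar n r (T l)) + bstar n r (cstar n m (T l))) +
      (bstar n r (cstar n l (T m)) + bstar n l (cstar n r (T m))))
      = (∑ m, cc m (bstar n l (cstar n m (T r)))) + (∑ m, cc m (bstar n m (cstar n l (T r))))
        + ((∑ m, cc m (bstar n m (cstar n r (T l)))) + (∑ m, cc m (bstar n r (cstar n m (T l)))))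
        + ((∑ m, cc m (bstar n r (cstar n l (T m)))) + (∑ m, cc m (bstar n l (cstar n r (T m))))) := by
    simp only [map_add, Finset.sum_add_distrib]
  rw [hexp, H1 l r, H2 l r, H2 r l, H1 r l, H3 r l, H3 l r] at hsum
  linear_combination (norm := module) -hsum

/-- The level-`j` identity `(Cj)`, by induction on `j` applying `G`. -/
lemma Cj (j : ℕ) (l r : Fin n) :
    cstar n l (Gpow (j+1) (T r)) + cstar n r (Gpow (j+1) (T l))
      = ((n:ℝ) - k + 2 + j) • (bstar n l (Gpow j (T r)) + bstar n r (Gpow j (T l)))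
        - ((-1:ℝ)^j) • (bstar n r (cstar n l (Gpow j (VT T)))
            + bstar n l (cstar n r (Gpow j (VT T)))) := by
  induction j generalizing l r with
  | zero =>
      have e1 : ∀ x : Hspace n, Gpow 1 x = Gop x := fun x => rfl
      simpa [e1] using C0 T hmem hcyc l r
  | succ j ih =>
      have key := congrArg (⇑Gop) (ih l r)
      rw [map_add, map_sub, map_smul, map_smul, map_add, map_add,
        G_cstar, G_cstar, G_bstar, G_bstar,
        ← Gpow_succ_apply, ← Gpow_succ_apply] at key
      -- expand the G on the V-terms
      have hV1 : Gop (bstar n r (cstar n l (Gpow j (VT T))))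
          = - bstar n r (bstar n l (Gpow j (VT T)))
            + bstar n r (cstar n l (Gpow (j+1) (VT T))) := by
        rw [G_bstar, G_cstar, map_sub, ← Gpow_succ_apply]
        abel
      have hV2 : Gop (bstar n l (cstar n r (Gpow j (VT T))))
          = - bstar n l (bstar n r (Gpow j (VT T)))
            + bstar n l (cstar n r (Gpow (j+1) (VT T))) := by
        rw [G_bstar, G_cstar, map_sub, ← Gpow_succ_apply]
        abel
      rw [hV1, hV2, bstar_bstar l r] at key
      simp only [← Gpow_succ_apply] at key
      have hc : ((-1:ℝ)^(j+1)) = -((-1:ℝ)^j) := by ring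
      have hc2 : ((n:ℝ) - k + 2 + (j+1 : ℕ)) = ((n:ℝ) - k + 2 + j) + 1 := by push_cast; ring
      rw [hc, hc2]
      linear_combination (norm := module) -key

/-- The doubly-contracted recursion `(Rj)`. -/
lemma Rj (j : ℕ) (r : Fin n) :
    (((n:ℝ) - k + 2 + j) * ((n:ℝ) - k + 1 - j)) • Gpow j (T r)
      = Gop' (Gpow (j+1) (T r)) + cstar n r (uT T (j+1))
        + ((n:ℝ) - k + 2 + j) • bstar n r (uT T j)
        + ((-1:ℝ)^j * ((n:ℝ) - k - j + 1)) • cstar n r (Gpow j (VT T))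
        - ((-1:ℝ)^j) • bstar n r (Gop' (Gpow j (VT T))) := by
  have A1 : ∑ l, bb l (cstar n l (Gpow (j+1) (T r))) = Gop' (Gpow (j+1) (T r)) := by
    have e : ∀ l : Fin n, bb l (cstar n l (Gpow (j+1) (T r)))
        = cstar n l (bb l (Gpow (j+1) (T r))) := fun l => bb_cstar l l _
    rw [Finset.sum_congr rfl fun l _ => e l, ← Gop'_apply]
  have A2 : ∑ l, bb l (cstar n r (Gpow (j+1) (T l))) = cstar n r (uT T (j+1)) := by
    have e : ∀ l : Fin n, bb l (cstar n r (Gpow (j+1) (T l)))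
        = cstar n r (bb l (Gpow (j+1) (T l))) := fun l => bb_cstar l r _
    rw [Finset.sum_congr rfl fun l _ => e l, ← map_sum, ← uT]
  have A3 : ∑ l, bb l (bstar n l (Gpow j (T r))) = ((n:ℝ) - (k+j)) • Gpow j (T r) := by
    have := sum_bb_bstar (Tj_mem T hmem j r)
    rwa [Nat.cast_add] at this
  have A4 : ∑ l, bb l (bstar n r (Gpow j (T l))) = Gpow j (T r) - bstar n r (uT T j) := by
    have e : ∀ l : Fin n, bb l (bstar n r (Gpow j (T l)))
        = (if l = r then Gpow j (T l) else 0) - bstar n r (bb l (Gpow j (T l))) :=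
      fun l => by rw [bb_bstar]
    rw [Finset.sum_congr rfl fun l _ => e l, Finset.sum_sub_distrib, sum_if, ← map_sum, ← uT]
  have A5 : ∑ l, bb l (bstar n r (cstar n l (Gpow j (VT T))))
      = cstar n r (Gpow j (VT T)) - bstar n r (Gop' (Gpow j (VT T))) := by
    have e : ∀ l : Fin n, bb l (bstar n r (cstar n l (Gpow j (VT T))))
        = (if l = r then cstar n l (Gpow j (VT T)) else 0)
          - bstar n r (cstar n l (bb l (Gpow j (VT T)))) := fun l => by
      rw [bb_bstar, bb_cstar]
    rw [Finset.sum_congr rfl fun l _ => e l, Finset.sum_sub_distrib, sum_if, ← map_sum,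
      ← Gop'_apply]
  have A6 : ∑ l, bb l (bstar n l (cstar n r (Gpow j (VT T))))
      = ((n:ℝ) - (k+j)) • cstar n r (Gpow j (VT T)) := by
    have := sum_bb_bstar (cstar_mem r (Vj_mem T hmem j))
    rwa [Nat.cast_add] at this
  have key : ∑ l, bb l (cstar n l (Gpow (j+1) (T r)) + cstar n r (Gpow (j+1) (T l)))
      = ∑ l, bb l (((n:ℝ) - k + 2 + j) • (bstar n l (Gpow j (T r)) + bstar n r (Gpow j (T l)))
        - ((-1:ℝ)^j) • (bstar n r (cstar n l (Gpow j (VT T)))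
            + bstar n l (cstar n r (Gpow j (VT T))))) :=
    Finset.sum_congr rfl fun l _ => by rw [Cj T hmem hcyc j l r]
  simp only [map_add, map_sub, map_smul, Finset.sum_add_distrib, Finset.sum_sub_distrib,
    ← Finset.smul_sum] at key
  rw [A1, A2, A3, A4, A5, A6] at key
  linear_combination (norm := module) -key

/-- Downward induction constructing the potentials. -/
lemma descend (hk1 : 1 ≤ k) (hk2 : k ≤ n) :
    ∀ d j, j + d = min k (n-k) + 1 →
      ∃ B C, B ∈ extTensorSub n (k-1+j) (k-j) ∧ C ∈ extTensorSub n (k+j) (k-1-j)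
        ∧ (k+1 ≤ j → B = 0) ∧ (k ≤ j → C = 0)
        ∧ ∀ r, Gpow j (T r) = bstar n r B + cstar n r C := by
  intro d
  induction d with
  | zero =>
      intro j hj
      refine ⟨0, 0, zero_mem _, zero_mem _, fun _ => rfl, fun _ => rfl, fun r => ?_⟩
      rw [map_zero, map_zero, add_zero]
      rcases le_or_gt k (n-k) with h | h
      · have hjk : k + 1 ≤ j := by omega
        exact Tj_zero T hmem hjk r
      · have hj' : n + 1 ≤ k + j := by omega
        exact E_top_zero hj' (Tj_mem T hmem j r)
  | succ d ih =>
      intro j hj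
      obtain ⟨B', C', hB'm, hC'm, hB'z, hC'z, hEq'⟩ := ih (j+1) (by omega)
      have hjle : j ≤ min k (n-k) := by omega
      have hjnk : (j:ℝ) ≤ (n:ℝ) - k := by
        have hj2 : j ≤ n - k := le_trans hjle (min_le_right _ _)
        have h3 : ((j:ℕ):ℝ) ≤ ((n - k : ℕ):ℝ) := Nat.cast_le.mpr hj2
        rwa [Nat.cast_sub hk2] at h3
      have hnk0 : (0:ℝ) ≤ (n:ℝ) - k := by
        have h4 : ((k:ℕ):ℝ) ≤ ((n:ℕ):ℝ) := Nat.cast_le.mpr hk2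
        linarith
      set a : ℝ := (n:ℝ) - k + 2 + j with ha_def
      set κ : ℝ := a * ((n:ℝ) - k + 1 - j) with hκ_def
      have hκ : κ ≠ 0 := by
        have h1 : (0:ℝ) < a := by
          have : (0:ℝ) ≤ (j:ℝ) := Nat.cast_nonneg j
          rw [ha_def]; linarith
        have h2 : (0:ℝ) < (n:ℝ) - k + 1 - j := by linarith
        exact ne_of_gt (mul_pos h1 h2)
      -- the new potentials
      refine ⟨κ⁻¹ • (a • uT T j - ((-1:ℝ)^j) • Gop' (Gpow j (VT T)) - Gop' B'),
              κ⁻¹ • (uT T (j+1) + ((-1:ℝ)^j * ((n:ℝ) - k + 1 - j)) • Gpow j (VT T)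
                + B' - Gop' C'), ?_, ?_, ?_, ?_, ?_⟩
      · -- membership of B
        refine Submodule.smul_mem _ _ (sub_mem (sub_mem
          (Submodule.smul_mem _ _ (uT_mem T hmem hk1 j)) (Submodule.smul_mem _ _ ?_)) ?_)
        · by_cases hcase : j < k
          · have h0 := G'_mem (Vj_mem T hmem j)
            have e1 : k + j - 1 = k - 1 + j := by omega
            have e2 : k - 1 - j + 1 = k - j := by omega
            rwa [e1, e2] at h0
          · rw [Vj_zero T hmem hk1 (by omega), map_zero]
            exact zero_mem _
        · by_cases hcase : j < k
          · have h0 := G'_mem hB'm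
            have e1 : k - 1 + (j+1) - 1 = k - 1 + j := by omega
            have e2 : k - (j+1) + 1 = k - j := by omega
            rwa [e1, e2] at h0
          · rw [hB'z (by omega), map_zero]
            exact zero_mem _
      · -- membership of C
        refine Submodule.smul_mem _ _ (sub_mem (add_mem (add_mem ?_
          (Submodule.smul_mem _ _ (Vj_mem T hmem j))) ?_) ?_)
        · have h0 := uT_mem T hmem hk1 (j+1)
          have e1 : k - 1 + (j+1) = k + j := by omega
          have e2 : k - (j+1) = k - 1 - j := by omega
          rwa [e1, e2] at h0
        · have e1 : k - 1 + (j+1) = k + j := by omega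
          have e2 : k - (j+1) = k - 1 - j := by omega
          rwa [e1, e2] at hB'm
        · by_cases hcase : j + 2 ≤ k
          · have h0 := G'_mem hC'm
            have e1 : k + (j+1) - 1 = k + j := by omega
            have e2 : k - 1 - (j+1) + 1 = k - 1 - j := by omega
            rwa [e1, e2] at h0
          · rw [hC'z (by omega), map_zero]
            exact zero_mem _
      · -- B vanishes high up
        intro hjk
        rw [uT_zero T hmem hjk, Vj_zero T hmem hk1 (by omega), hB'z (by omega)]
        simp
      · -- C vanishes high up
        intro hjk
        rw [uT_zero T hmem (by omega), Vj_zero T hmem hk1 (by omega), hB'z (by omega),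
          hC'z (by omega)]
        simp
      · -- the reconstruction identity
        intro r
        have hR := Rj T hmem hcyc j r
        rw [hEq' r, map_add, G'_bstar, G'_cstar] at hR
        simp only [map_smul, map_sub, map_add]
        rw [show ((n:ℝ) - k + 2 + j) = a from rfl] at hR
        linear_combination (norm := (match_scalars <;> field_simp <;> ring_nf <;> (rw [hκ_def]; ring)))
          (κ⁻¹ : ℝ) • hR

/-- Existence of the (not yet symmetrized) potentials. -/
lemma exists_potential (hk1 : 1 ≤ k) (hk2 : k ≤ n) :
    ∃ B C, B ∈ extTensorSub n (k-1) k ∧ C ∈ extTensorSub n k (k-1)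
      ∧ ∀ r, T r = bstar n r B + cstar n r C := by
  obtain ⟨B, C, hBm, hCm, _, _, hEq⟩ :=
    descend T hmem hcyc hk1 hk2 (min k (n-k) + 1) 0 (by omega)
  refine ⟨B, C, ?_, ?_, fun r => ?_⟩
  · simpa using hBm
  · simpa using hCm
  · simpa using hEq r

end MainDerivation

end CyclicAux

theorem cyclic_equations_solution' {n k : ℕ} (hk1 : 1 ≤ k) (hk2 : k ≤ n)
    (T : Fin n → Hspace n) (hmem : ∀ l, T l ∈ extTensorSub n k k) :
    ((∀ l, Sflip n (T l) = T l) ∧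
      (∀ l m r : Fin n,
        (bstar n l (cstar n m (T r)) + bstar n m (cstar n l (T r))) +
          (bstar n m (cstar n r (T l)) + bstar n r (cstar n m (T l))) +
          (bstar n r (cstar n l (T m)) + bstar n l (cstar n r (T m))) = 0)) ↔
    ∃ B ∈ extTensorSub n (k - 1) k,
      ∀ l, T l = bstar n l B + cstar n l (Sflip n B) := by
  constructor
  · rintro ⟨hsym, hcyc⟩
    obtain ⟨B₀, C₀, hBm, hCm, hEq⟩ := CyclicAux.exists_potential T hmem hcyc hk1 hk2
    refine ⟨(1/2 : ℝ) • (B₀ + Sflip n C₀),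
      Submodule.smul_mem _ _ (add_mem hBm (CyclicAux.Sflip_mem hCm)), fun l => ?_⟩
    have h1 := hEq l
    have h2 : T l = cstar n l (Sflip n B₀) + bstar n l (Sflip n C₀) := by
      conv_lhs => rw [← hsym l]
      rw [h1, map_add, CyclicAux.Sflip_bstar, CyclicAux.Sflip_cstar]
    have hS : Sflip n ((1/2 : ℝ) • (B₀ + Sflip n C₀))
        = (1/2 : ℝ) • (Sflip n B₀ + C₀) := by
      rw [map_smul, map_add, CyclicAux.Sflip_Sflip]
    rw [hS]
    simp only [map_smul, map_add]
    linear_combination (norm := module) ((1:ℝ)/2) • h1 + ((1:ℝ)/2) • h2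
  · rintro ⟨B, hBmem, hB⟩
    constructor
    · intro l
      rw [hB l, map_add, CyclicAux.Sflip_bstar, CyclicAux.Sflip_cstar, CyclicAux.Sflip_Sflip]
      abel
    · intro l m r
      have c1 : ∀ (a b c : Fin n) (Z : Hspace n),
          bstar n a (cstar n b (bstar n c Z)) + bstar n c (cstar n b (bstar n a Z)) = 0 := by
        intro a b c Z
        rw [← CyclicAux.bstar_cstar, ← CyclicAux.bstar_cstar, CyclicAux.bstar_bstar a c]
        abel
      have c2 : ∀ (a b c : Fin n) (Z : Hspace n),
          bstar n a (cstar n b (cstar n c Z)) + bstar n a (cstar n c (cstar n b Z)) = 0 := by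
        intro a b c Z
        rw [CyclicAux.cstar_cstar b c, map_neg]
        abel
      rw [hB l, hB m, hB r]
      simp only [map_add]
      linear_combination (norm := module) c1 l m r B + c1 m l r B + c1 m r l B
        + c2 l m r (Sflip n B) + c2 m l r (Sflip n B) + c2 r m l (Sflip n B)

theorem cyclic_equations_solution {n k : ℕ} (hk1 : 1 ≤ k) (hk2 : k ≤ n)
    (T : Fin n → Hspace n) (hmem : ∀ l, T l ∈ extTensorSub n k k) :
    ((∀ l, Sflip n (T l) = T l) ∧
      (∀ l m r : Fin n,
        (bstar n l (cstar n m (T r)) + bstar n m (cstar n l (T r))) +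
          (bstar n m (cstar n r (T l)) + bstar n r (cstar n m (T l))) +
          (bstar n r (cstar n l (T m)) + bstar n l (cstar n r (T m))) = 0)) ↔
    ∃ B ∈ extTensorSub n (k - 1) k,
      ∀ l, T l = bstar n l B + cstar n l (Sflip n B) := by
  exact cyclic_equations_solution' hk1 hk2 T hmem

end
end

section
/- For all indices l, m, r, s ∈ {1,…,n}, the following operator identity holds on H: (b*_l c*_m + b*_m c*_l)(b*_r c*_s + b*_s c*_r) + (b*_m c*_r + b*_r c*_m)(b*_l c*_s + b*_s c*_l) + (b*_r c*_l + b*_l c*_r)(b*_m c*_s + b*_s c*_m) = 0, i.e. the sum over cyclic permutations of (l,m,r) of (b*_l c*_m + b*_m c*_l)(b*_r c*_s + b*_s c*_r) vanishes identically. (Consequently the tensors T^{lm} := −(1/2k²)(b*_l c*_m + b*_m c*_l)T^{(1)} identically satisfy the cyclic equations Σ_{cyc(l,m,r)} (b*_l c*_m + b*_m c*_l) T^{rs} = 0 for any T^{(1)} ∈ H.) -/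
open scoped BigOperators TensorProduct

noncomputable section

lemma bstar_cstar_comm {n : ℕ} (a b : Fin n) (x : Hspace n) :
    bstar n b (cstar n a x) = cstar n a (bstar n b x) := by
  induction x using TensorProduct.induction_on with
  | zero => simp
  | tmul u v => simp [bstar, cstar]
  | add x y hx hy => simp [hx, hy]

lemma bstar_anticomm {n : ℕ} (a b : Fin n) (x : Hspace n) :
    bstar n a (bstar n b x) = - bstar n b (bstar n a x) := by
  induction x using TensorProduct.induction_on with
  | zero => simp
  | tmul u v =>
      simp only [bstar, TensorProduct.map_tmul, LinearMap.mulLeft_apply, LinearMap.id_apply,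
        ← mul_assoc]
      rw [show (ExteriorAlgebra.ι ℝ (Pi.single a 1 : Fin n → ℝ)) *
          (ExteriorAlgebra.ι ℝ (Pi.single b 1 : Fin n → ℝ)) =
          - ((ExteriorAlgebra.ι ℝ (Pi.single b 1 : Fin n → ℝ)) *
          (ExteriorAlgebra.ι ℝ (Pi.single a 1 : Fin n → ℝ))) from
        eq_neg_of_add_eq_zero_left (ExteriorAlgebra.ι_add_mul_swap _ _)]
      simp [TensorProduct.neg_tmul]
  | add x y hx hy => simp only [map_add, hx, hy]; abel

lemma cstar_anticomm {n : ℕ} (a b : Fin n) (x : Hspace n) :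
    cstar n a (cstar n b x) = - cstar n b (cstar n a x) := by
  induction x using TensorProduct.induction_on with
  | zero => simp
  | tmul u v =>
      simp only [cstar, TensorProduct.map_tmul, LinearMap.mulLeft_apply, LinearMap.id_apply,
        ← mul_assoc]
      rw [show (ExteriorAlgebra.ι ℝ (Pi.single a 1 : Fin n → ℝ)) *
          (ExteriorAlgebra.ι ℝ (Pi.single b 1 : Fin n → ℝ)) =
          - ((ExteriorAlgebra.ι ℝ (Pi.single b 1 : Fin n → ℝ)) *
          (ExteriorAlgebra.ι ℝ (Pi.single a 1 : Fin n → ℝ))) from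
        eq_neg_of_add_eq_zero_left (ExteriorAlgebra.ι_add_mul_swap _ _)]
      simp [TensorProduct.tmul_neg]
  | add x y hx hy => simp only [map_add, hx, hy]; abel

theorem cyclic_operator_identity {n : ℕ} (l m r s : Fin n) (h : Hspace n) :
    (bstar n l (cstar n m (bstar n r (cstar n s h) + bstar n s (cstar n r h))) +
        bstar n m (cstar n l (bstar n r (cstar n s h) + bstar n s (cstar n r h)))) +
      (bstar n m (cstar n r (bstar n l (cstar n s h) + bstar n s (cstar n l h))) +
        bstar n r (cstar n m (bstar n l (cstar n s h) + bstar n s (cstar n l h)))) +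
      (bstar n r (cstar n l (bstar n m (cstar n s h) + bstar n s (cstar n m h))) +
        bstar n l (cstar n r (bstar n m (cstar n s h) + bstar n s (cstar n m h)))) = 0 := by
  simp only [map_add, bstar_cstar_comm]
  rw [bstar_anticomm r l h, bstar_anticomm r m h, bstar_anticomm l m h,
    cstar_anticomm r l (bstar n m (bstar n s h)),
    cstar_anticomm r m (bstar n l (bstar n s h)),
    cstar_anticomm m l (bstar n r (bstar n s h))]
  simp only [map_neg]
  abel

end
end

section
/- Let T be a smooth function on J², let p be a real number, and suppose that for every orientation-preserving diffeomorphism F of ℝ (F′ > 0 everywhere) one has T ∘ φ̇_F = (F′(ψ))^{p−1} · T, where φ̇_F(x, ψ, ψ_μ, ψ_{μν}) := (x, F(ψ), F′(ψ)ψ_μ, F′(ψ)ψ_{μν} + F″(ψ)ψ_μψ_ν). Then T satisfies: (i) ∂T = 0; (ii) the homogeneity equation Σ_μ ψ_μ ∂^μ T + Σ_{μ,ν} ψ_{μν} ∂^{μν} T = (p−1) T, equivalently T(x, ψ, λψ_μ, λψ_{μν}) = λ^{p−1} T(x, ψ, ψ_μ, ψ_{μν}) for all λ > 0; and (iii) Σ_{μ,ν}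 ψ_μ ψ_ν ∂^{μν} T = 0. -/
open scoped BigOperators

noncomputable section

/-- The first-order scalar jet space `(x, ψ, ψ_μ)` over `ℝ^n`. -/
abbrev J1 (n : ℕ) : Type := (Fin n → ℝ) × ℝ × (Fin n → ℝ)

/-- The second-order scalar jet space `(x, ψ, ψ_μ, ψ_{μν})` over `ℝ^n`, with the
second-order variable represented by a full (not a priori symmetric) matrix. -/
abbrev J2 (n : ℕ) : Type := (Fin n → ℝ) × ℝ × (Fin n → ℝ) × (Fin n → Fin n → ℝ)

/-- The fourth-order scalar jet space `(x, ψ, ψ_μ, ψ_{μν}, ψ_{μνρ}, ψ_{μνρσ})`. -/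
abbrev J4 (n : ℕ) : Type :=
  (Fin n → ℝ) × ℝ × (Fin n → ℝ) × (Fin n → Fin n → ℝ) ×
    ((Fin 3 → Fin n) → ℝ) × ((Fin 4 → Fin n) → ℝ)

/-- Symmetrization of a matrix. -/
def symmM {n : ℕ} (q : Fin n → Fin n → ℝ) : Fin n → Fin n → ℝ :=
  fun i j => (q i j + q j i) / 2

/-- `T` depends only on the symmetric part of the second-order variable, i.e. `T` is the
canonical extension `T̃(q) = T((q+qᵀ)/2)` of a function of the symmetric coordinates `ψ_{μν}`. -/
def SymmDep {n : ℕ} (T : J2 n → ℝ) : Prop :=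
  ∀ x ψ p q, T (x, ψ, p, q) = T (x, ψ, p, symmM q)

/-- The symmetrized elementary matrix `(E_{μν} + E_{νμ})/2`, the direction computing the
normalized derivative `∂^{μν}`. -/
def symE {n : ℕ} (μ ν : Fin n) : Fin n → Fin n → ℝ := fun i j =>
  ((if i = μ ∧ j = ν then (1 : ℝ) else 0) + (if i = ν ∧ j = μ then (1 : ℝ) else 0)) / 2

/-- The symmetrized elementary tensor of order `l` attached to a tuple `μ`, the direction
computing the normalized derivative `∂^{μ₁...μ_l} = (r₁!⋯r_n!/l!) ∂/∂ψ_{{μ₁...μ_l}}`. -/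
def symT {n l : ℕ} (μ : Fin l → Fin n) : (Fin l → Fin n) → ℝ := fun i =>
  (∑ σ : Equiv.Perm (Fin l), if i = μ ∘ σ then (1 : ℝ) else 0) / (l.factorial : ℝ)

/-- `∂T := ∂T/∂ψ` on `J²`. -/
def pdPsi {n : ℕ} (T : J2 n → ℝ) : J2 n → ℝ := fun z => fderiv ℝ T z (0, 1, 0, 0)

/-- `∂T/∂x^μ` on `J²`. -/
def pdX {n : ℕ} (T : J2 n → ℝ) (μ : Fin n) : J2 n → ℝ := fun z =>
  fderiv ℝ T z (Pi.single μ 1, 0, 0, 0)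

/-- `∂^μ T := ∂T/∂ψ_μ` on `J²`. -/
def pd1 {n : ℕ} (T : J2 n → ℝ) (μ : Fin n) : J2 n → ℝ := fun z =>
  fderiv ℝ T z (0, 0, Pi.single μ 1, 0)

/-- The normalized second-order derivative `∂^{μν} T` on `J²`. -/
def pd2 {n : ℕ} (T : J2 n → ℝ) (μ ν : Fin n) : J2 n → ℝ := fun z =>
  fderiv ℝ T z (0, 0, 0, symE μ ν)

/-- The equations (ADK′):
`∂^{μρ₁}∂^{ρ₂ρ₃}T + ∂^{μρ₂}∂^{ρ₃ρ₁}T + ∂^{μρ₃}∂^{ρ₁ρ₂}T = 0`. -/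
def ADKfirst {n : ℕ} (T : J2 n → ℝ) : Prop :=
  ∀ μ ρ₁ ρ₂ ρ₃ : Fin n, ∀ z : J2 n,
    pd2 (pd2 T ρ₂ ρ₃) μ ρ₁ z + pd2 (pd2 T ρ₃ ρ₁) μ ρ₂ z + pd2 (pd2 T ρ₁ ρ₂) μ ρ₃ z = 0

/-- The truncated total derivative `D̃_μ := ∂/∂x^μ + ψ_μ ∂ + Σ_ν ψ_{μν} ∂^ν` acting on
functions on `J²`. -/
def Dt {n : ℕ} (μ : Fin n) (T : J2 n → ℝ) : J2 n → ℝ := fun z =>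
  pdX T μ z + z.2.2.1 μ * pdPsi T z + ∑ ν, z.2.2.2 μ ν * pd1 T ν z

/-- The equations (ADK″): `∂^μ T = Σ_ν (∂/∂x^ν + ψ_ν ∂ + Σ_ρ ψ_{νρ} ∂^ρ) ∂^{μν} T`. -/
def ADKsecond {n : ℕ} (T : J2 n → ℝ) : Prop :=
  ∀ μ : Fin n, ∀ z : J2 n, pd1 T μ z = ∑ ν, Dt ν (pd2 T μ ν) z

open Classical in
/-- The Levi–Civita symbol `ε^{μ₁...μ_n}`. -/
def lc {n : ℕ} (μ : Fin n → Fin n) : ℝ :=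
  if h : Function.Bijective μ then ((Equiv.Perm.sign (Equiv.ofBijective μ h) : ℤ) : ℝ) else 0

/-- The minor `ψ^{μ₁...μ_k;ν₁...ν_k} := (1/(n−k)!) Σ ε^{μ₁...μ_n} ε^{ν₁...ν_n}
ψ_{μ_{k+1}ν_{k+1}} ⋯ ψ_{μ_nν_n}` of the matrix `q`. -/
def minorP {n : ℕ} (k : ℕ) (μ ν : Fin k → Fin n) (q : Fin n → Fin n → ℝ) : ℝ :=
  if h : k + (n - k) = n then
    ((n - k).factorial : ℝ)⁻¹ *
      ∑ a : Fin (n - k) → Fin n, ∑ b : Fin (n - k) → Fin n,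
        lc (Fin.append μ a ∘ Fin.cast h.symm) * lc (Fin.append ν b ∘ Fin.cast h.symm) *
          ∏ i, q (a i) (b i)
  else 0

/-- The coefficients of a minor-polynomial representation: smooth functions of `(x, ψ, ψ_μ)`
only, completely antisymmetric in the `μ`'s, completely antisymmetric in the `ν`'s, and
symmetric under the interchange of the two index groups. -/
def MinorCoeffOK {n : ℕ}
    (c : (k : ℕ) → (Fin k → Fin n) → (Fin k → Fin n) → J1 n → ℝ) : Prop :=
  (∀ k (μ ν : Fin k → Fin n), ContDiff ℝ (⊤ : ℕ∞) (c k μ ν)) ∧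
  (∀ k (μ ν : Fin k → Fin n) (σ : Equiv.Perm (Fin k)) (w : J1 n),
      c k (μ ∘ σ) ν w = ((Equiv.Perm.sign σ : ℤ) : ℝ) * c k μ ν w) ∧
  (∀ k (μ ν : Fin k → Fin n) (σ : Equiv.Perm (Fin k)) (w : J1 n),
      c k μ (ν ∘ σ) w = ((Equiv.Perm.sign σ : ℤ) : ℝ) * c k μ ν w) ∧
  (∀ k (μ ν : Fin k → Fin n) (w : J1 n), c k ν μ w = c k μ ν w)

/-- `T = Σ_{k=0}^{n} (1/(k!)²) T_{μ₁…μ_k;ν₁…ν_k} ψ^{μ₁…μ_k;ν₁…ν_k}` (sum over all repeated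
indices), evaluated on the symmetric part of the second-order variable. -/
def MinorRep {n : ℕ} (T : J2 n → ℝ)
    (c : (k : ℕ) → (Fin k → Fin n) → (Fin k → Fin n) → J1 n → ℝ) : Prop :=
  ∀ x ψ p q, T (x, ψ, p, q) =
    ∑ k ∈ Finset.range (n + 1), ((k.factorial : ℝ)⁻¹) ^ 2 *
      ∑ μ : Fin k → Fin n, ∑ ν : Fin k → Fin n,
        c k μ ν (x, ψ, p) * minorP k μ ν (symmM q)

/-- `T` has the minor-polynomial form of Theorem 2. -/
def MinorPolyForm {n : ℕ} (T : J2 n → ℝ) : Prop :=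
  ∃ c, MinorCoeffOK c ∧ MinorRep T c

/-! ### Fourth-order machinery -/

/-- The canonical projection `π : J⁴ → J²`. -/
def proj24 {n : ℕ} (z : J4 n) : J2 n := (z.1, z.2.1, z.2.2.1, z.2.2.2.1)

def pdPsi4 {n : ℕ} (f : J4 n → ℝ) : J4 n → ℝ := fun z => fderiv ℝ f z (0, 1, 0, 0, 0, 0)

def pdX4 {n : ℕ} (f : J4 n → ℝ) (μ : Fin n) : J4 n → ℝ := fun z =>
  fderiv ℝ f z (Pi.single μ 1, 0, 0, 0, 0, 0)

def pd14 {n : ℕ} (f : J4 n → ℝ) (μ : Fin n) : J4 n → ℝ := fun z =>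
  fderiv ℝ f z (0, 0, Pi.single μ 1, 0, 0, 0)

def pd24 {n : ℕ} (f : J4 n → ℝ) (μ ν : Fin n) : J4 n → ℝ := fun z =>
  fderiv ℝ f z (0, 0, 0, symE μ ν, 0, 0)

/-- The normalized third-order derivative `∂^{μνρ}` on `J⁴`. -/
def pd34 {n : ℕ} (f : J4 n → ℝ) (μ ν ρ : Fin n) : J4 n → ℝ := fun z =>
  fderiv ℝ f z (0, 0, 0, 0, symT ![μ, ν, ρ], 0)

/-- The total derivative
`D_μ f = ∂f/∂x^μ + ψ_μ ∂f + ψ_{μν} ∂^ν f + ψ_{μνρ} ∂^{νρ} f + ψ_{μνρσ} ∂^{νρσ} f`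
(summation over repeated indices) on `J⁴`. -/
def Dtot {n : ℕ} (μ : Fin n) (f : J4 n → ℝ) : J4 n → ℝ := fun z =>
  pdX4 f μ z + z.2.2.1 μ * pdPsi4 f z + (∑ ν, z.2.2.2.1 μ ν * pd14 f ν z) +
    (∑ ν, ∑ ρ, z.2.2.2.2.1 ![μ, ν, ρ] * pd24 f ν ρ z) +
    (∑ ν, ∑ ρ, ∑ σ, z.2.2.2.2.2 ![μ, ν, ρ, σ] * pd34 f ν ρ σ z)

/-- The Euler–Lagrange expression `E(L) := ∂L − D_μ(∂^μ L) + D_μ D_ν (∂^{μν} L)` of a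
second-order Lagrangian, a function on `J⁴`. -/
def EL {n : ℕ} (L : J2 n → ℝ) : J4 n → ℝ := fun z =>
  pdPsi L (proj24 z) - (∑ μ, Dtot μ (fun w => pd1 L μ (proj24 w)) z) +
    ∑ μ, ∑ ν, Dtot μ (Dtot ν (fun w => pd2 L μ ν (proj24 w))) z

/-- The reduced second-order Euler–Lagrange expression
`∂L − D̃_μ(∂^μL) + D̃_{μ₁}D̃_{μ₂}(∂^{μ₁μ₂}L)`, a function on `J²`. -/
def EL2 {n : ℕ} (L : J2 n → ℝ) : J2 n → ℝ := fun z =>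
  pdPsi L z - (∑ μ, Dt μ (pd1 L μ) z) + ∑ μ, ∑ ν, Dt μ (Dt ν (pd2 L μ ν)) z

/-- The Tonti Lagrangian `L = ∫₀¹ ψ T(x, λψ, λψ_μ, λψ_{μν}) dλ`. -/
def Tonti {n : ℕ} (T : J2 n → ℝ) : J2 n → ℝ := fun z =>
  ∫ lam in (0 : ℝ)..1, z.2.1 * T (z.1, lam * z.2.1, lam • z.2.2.1, lam • z.2.2.2)

/-! ### First-order derivative operators -/

def pdX1 {n : ℕ} (f : J1 n → ℝ) (μ : Fin n) : J1 n → ℝ := fun w =>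
  fderiv ℝ f w (Pi.single μ 1, 0, 0)

def pdPsi1 {n : ℕ} (f : J1 n → ℝ) : J1 n → ℝ := fun w => fderiv ℝ f w (0, 1, 0)

def pd11 {n : ℕ} (f : J1 n → ℝ) (μ : Fin n) : J1 n → ℝ := fun w =>
  fderiv ℝ f w (0, 0, Pi.single μ 1)

/-- `δ/δx^μ := ∂/∂x^μ + ψ_μ ∂` on functions of `(x, ψ, ψ_μ)`. -/
def dX1var {n : ℕ} (f : J1 n → ℝ) (μ : Fin n) : J1 n → ℝ := fun w =>
  pdX1 f μ w + w.2.2 μ * pdPsi1 f w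

/-! ### Minkowski structures -/

/-- The Minkowski metric `G = diag(1, −1, …, −1)` on `ℝ^n`. -/
def MinkG (n : ℕ) : Fin n → Fin n → ℝ := fun i j =>
  if i = j then (if (i : ℕ) = 0 then 1 else -1) else 0

/-- The proper orthochronous Lorentz group. -/
def IsLorentz {n : ℕ} (L : Fin n → Fin n → ℝ) : Prop :=
  (∀ i j, ∑ ρ, ∑ σ, L ρ i * MinkG n ρ σ * L σ j = MinkG n i j) ∧
    Matrix.det (Matrix.of L) = 1 ∧ ∀ h : 0 < n, 1 ≤ L ⟨0, h⟩ ⟨0, h⟩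

/-- The (lifted) action of the Poincaré group on `J²`:
`φ̇_{L,a}(x,ψ,ψ_μ,ψ_{μν}) = (Lx+a, ψ, L_μ^ρ ψ_ρ, L_μ^ρ L_ν^σ ψ_{ρσ})`. -/
def pact {n : ℕ} (L : Fin n → Fin n → ℝ) (a : Fin n → ℝ) (z : J2 n) : J2 n :=
  (fun μ => (∑ ν, L μ ν * z.1 ν) + a μ, z.2.1,
   fun μ => ∑ ρ, L μ ρ * z.2.2.1 ρ,
   fun μ ν => ∑ ρ, ∑ σ, L μ ρ * L ν σ * z.2.2.2 ρ σ)

/-- The Lorentz invariant `J = G^{μν} ψ_μ ψ_ν`. -/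
def MinkJ {n : ℕ} (p : Fin n → ℝ) : ℝ := ∑ μ, ∑ ν, MinkG n μ ν * p μ * p ν

/-- The Lorentz invariant `I_k := (Π_{i=1}^k G_{μ_iν_i}) ψ^{μ₁…μ_k;ν₁…ν_k}`. -/
def Ik {n : ℕ} (k : ℕ) (q : Fin n → Fin n → ℝ) : ℝ :=
  ∑ μ : Fin k → Fin n, ∑ ν : Fin k → Fin n,
    (∏ i, MinkG n (μ i) (ν i)) * minorP k μ ν q

/-- The Lorentz invariant `J_k := ψ_{μ₁}ψ_{ν₁} (Π_{i=2}^k G_{μ_iν_i}) ψ^{μ₁…μ_k;ν₁…ν_k}`. -/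
def Jk {n : ℕ} (k : ℕ) (p : Fin n → ℝ) (q : Fin n → Fin n → ℝ) : ℝ :=
  if h : 0 < k then
    ∑ μ : Fin k → Fin n, ∑ ν : Fin k → Fin n,
      p (μ ⟨0, h⟩) * p (ν ⟨0, h⟩) *
        (∏ i ∈ Finset.univ.erase (⟨0, h⟩ : Fin k), MinkG n (μ i) (ν i)) * minorP k μ ν q
  else 0

/-- Derivative with respect to the first variable `ψ` of a function of `(ψ, J)`. -/
def d1 (F : ℝ × ℝ → ℝ) : ℝ × ℝ → ℝ := fun w => fderiv ℝ F w (1, 0)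

/-- Derivative with respect to the second variable `J` of a function of `(ψ, J)`. -/
def d2 (F : ℝ × ℝ → ℝ) : ℝ × ℝ → ℝ := fun w => fderiv ℝ F w (0, 1)

/-- The Poincaré-invariant normal form
`T = A₀ det(ψ_{μν}) + Σ_{k=1}^{n−1} (A_k I_k + B_k J_k) + A_n`. -/
def PoincT (n : ℕ) (A B : ℕ → ℝ × ℝ → ℝ) : J2 n → ℝ := fun z =>
  A 0 (z.2.1, MinkJ z.2.2.1) * Matrix.det (Matrix.of (symmM z.2.2.2)) +
    (∑ k ∈ Finset.Icc 1 (n - 1),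
      (A k (z.2.1, MinkJ z.2.2.1) * Ik k (symmM z.2.2.2) +
        B k (z.2.1, MinkJ z.2.2.1) * Jk k z.2.2.1 (symmM z.2.2.2))) +
    A n (z.2.1, MinkJ z.2.2.1)

/-- Equation (einv1): `∂A_{k−1}/∂ψ − 2k ∂A_k/∂J − 2J ∂B_k/∂J − (n+k) B_k = 0`
for `k = 1, …, n−1`. -/
def Einv1 (n : ℕ) (A B : ℕ → ℝ × ℝ → ℝ) : Prop :=
  ∀ m : ℕ, m + 1 ≤ n - 1 → ∀ w : ℝ × ℝ,
    d1 (A m) w - 2 * ((m : ℝ) + 1) * d2 (A (m + 1)) w - 2 * w.2 * d2 (B (m + 1)) w -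
      ((n : ℝ) + ((m : ℝ) + 1)) * B (m + 1) w = 0

/-- Equation (einv2): `∂B_k/∂ψ = 0` for `k = 1, …, n−2`. -/
def Einv2 (n : ℕ) (B : ℕ → ℝ × ℝ → ℝ) : Prop :=
  ∀ m : ℕ, m + 1 ≤ n - 2 → ∀ w : ℝ × ℝ, d1 (B (m + 1)) w = 0

/-- Equation (einv3): `2 ∂A_n/∂J + (n−1)! ∂A_{n−1}/∂ψ = 0`. -/
def Einv3 (n : ℕ) (A : ℕ → ℝ × ℝ → ℝ) : Prop :=
  ∀ w : ℝ × ℝ, 2 * d2 (A n) w + ((n - 1).factorial : ℝ) * d1 (A (n - 1)) w = 0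


/-- The lifted action `φ̇_F` of a diffeomorphism `F` of the field space `ℝ` on `J²`. -/
def uact {n : ℕ} (F : ℝ → ℝ) (z : J2 n) : J2 n :=
  (z.1, F z.2.1, fun μ => deriv F z.2.1 * z.2.2.1 μ,
   fun μ ν => deriv F z.2.1 * z.2.2.2 μ ν + deriv (deriv F) z.2.1 * z.2.2.1 μ * z.2.2.1 ν)

section AuxUI
variable {n : ℕ}

lemma symmM_map_add (q r : Fin n → Fin n → ℝ) : symmM (q + r) = symmM q + symmM r := by
  funext i j; simp [symmM]; ring

lemma symmM_map_smul (c : ℝ) (q : Fin n → Fin n → ℝ) : symmM (c • q) = c • symmM q := by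
  funext i j; simp [symmM, smul_eq_mul]; ring

lemma symmM_idem (q : Fin n → Fin n → ℝ) : symmM (symmM q) = symmM q := by
  funext i j; simp [symmM]; ring

def SLui (n : ℕ) : J2 n →L[ℝ] J2 n :=
  LinearMap.toContinuousLinearMap
  { toFun := fun z => (z.1, z.2.1, z.2.2.1, symmM z.2.2.2)
    map_add' := fun a b => by
      simp [Prod.ext_iff, symmM_map_add]
    map_smul' := fun c a => by
      simp [Prod.ext_iff, symmM_map_smul] }

lemma SLui_apply (z : J2 n) : SLui n z = (z.1, z.2.1, z.2.2.1, symmM z.2.2.2) := rfl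

lemma sum_smul_single (pv : Fin n → ℝ) :
    (∑ μ, pv μ • (Pi.single μ 1 : Fin n → ℝ)) = pv := by
  funext j
  simp [Finset.sum_apply, Pi.single_apply]

lemma sum_smul_symE (q : Fin n → Fin n → ℝ) :
    (∑ μ, ∑ ν, q μ ν • symE μ ν) = symmM q := by
  funext i j
  have S1 : (∑ μ, ∑ ν, q μ ν * (if i = μ ∧ j = ν then (1:ℝ) else 0)) = q i j := by
    simp [ite_and, mul_ite, Finset.sum_ite_eq]
  have S2 : (∑ μ, ∑ ν, q μ ν * (if i = ν ∧ j = μ then (1:ℝ) else 0)) = q j i := by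
    simp [ite_and, mul_ite, Finset.sum_ite_eq]
  have key : (∑ μ, ∑ ν, q μ ν • symE μ ν) i j
      = ((∑ μ, ∑ ν, q μ ν * (if i = μ ∧ j = ν then (1:ℝ) else 0))
        + (∑ μ, ∑ ν, q μ ν * (if i = ν ∧ j = μ then (1:ℝ) else 0))) / 2 := by
    simp only [Finset.sum_apply, Pi.smul_apply, symE, smul_eq_mul]
    rw [← Finset.sum_add_distrib, Finset.sum_div]
    refine Finset.sum_congr rfl fun μ _ => ?_
    rw [← Finset.sum_add_distrib, Finset.sum_div]
    refine Finset.sum_congr rfl fun ν _ => ?_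
    ring
  rw [key, S1, S2]; rfl

lemma vec_sum_pd1 (pv : Fin n → ℝ) :
    (∑ μ, pv μ • (((0 : Fin n → ℝ), (0:ℝ), Pi.single μ 1, (0 : Fin n → Fin n → ℝ)) : J2 n))
      = ((0, 0, pv, 0) : J2 n) := by
  rw [Prod.ext_iff, Prod.ext_iff, Prod.ext_iff]
  simp [Prod.fst_sum, Prod.snd_sum, sum_smul_single]

lemma vec_sum_pd2 (q : Fin n → Fin n → ℝ) :
    (∑ μ, ∑ ν, q μ ν • (((0 : Fin n → ℝ), (0:ℝ), (0 : Fin n → ℝ), symE μ ν) : J2 n))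
      = ((0, 0, 0, symmM q) : J2 n) := by
  rw [Prod.ext_iff, Prod.ext_iff, Prod.ext_iff]
  simp [Prod.fst_sum, Prod.snd_sum, ← sum_smul_symE]

lemma clm_sum_pd1 (D : J2 n →L[ℝ] ℝ) (pv : Fin n → ℝ) :
    (∑ μ, pv μ * D ((0, 0, Pi.single μ 1, 0) : J2 n)) = D ((0, 0, pv, 0) : J2 n) := by
  rw [← vec_sum_pd1, map_sum]
  simp only [map_smul, smul_eq_mul]

lemma clm_sum_pd2 (D : J2 n →L[ℝ] ℝ) (q : Fin n → Fin n → ℝ) :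
    (∑ μ, ∑ ν, q μ ν * D ((0, 0, 0, symE μ ν) : J2 n)) = D ((0, 0, 0, symmM q) : J2 n) := by
  rw [← vec_sum_pd2]
  rw [map_sum]
  refine Finset.sum_congr rfl fun μ _ => ?_
  rw [map_sum]
  simp only [map_smul, smul_eq_mul]

end AuxUI

theorem universal_invariance_infinitesimal {n : ℕ} (T : J2 n → ℝ)
    (hT : ContDiff ℝ (⊤ : ℕ∞) T) (hsym : SymmDep T) (p : ℝ)
    (hinv : ∀ F : ℝ → ℝ, ContDiff ℝ (⊤ : ℕ∞) F → (∀ t, 0 < deriv F t) →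
      Function.Bijective F →
      ∀ z : J2 n, T (uact F z) = Real.rpow (deriv F z.2.1) (p - 1) * T z) :
    (∀ z : J2 n, pdPsi T z = 0) ∧
    (∀ z : J2 n, (∑ μ, z.2.2.1 μ * pd1 T μ z) + (∑ μ, ∑ ν, z.2.2.2 μ ν * pd2 T μ ν z) =
      (p - 1) * T z) ∧
    (∀ (z : J2 n) (lam : ℝ), 0 < lam →
      T (z.1, z.2.1, lam • z.2.2.1, lam • z.2.2.2) = Real.rpow lam (p - 1) * T z) ∧
    (∀ z : J2 n, (∑ μ, ∑ ν, z.2.2.1 μ * z.2.2.1 ν * pd2 T μ ν z) = 0) := by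
  have hTd : Differentiable ℝ T := hT.differentiable (by simp)
  -- translation invariance in ψ
  have htrans : ∀ (x : Fin n → ℝ) (ψ a : ℝ) (pv : Fin n → ℝ) (q : Fin n → Fin n → ℝ),
      T (x, ψ + a, pv, q) = T (x, ψ, pv, q) := by
    intro x ψ a pv q
    have hF : ContDiff ℝ (⊤ : ℕ∞) (fun t : ℝ => t + a) := contDiff_id.add contDiff_const
    have hd : deriv (fun t : ℝ => t + a) = fun _ => 1 := by
      funext t; exact ((hasDerivAt_id t).add_const a).deriv
    have hdd : deriv (deriv (fun t : ℝ => t + a)) = fun _ => 0 := by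
      rw [hd]; funext t; exact deriv_const t 1
    have hbij : Function.Bijective (fun t : ℝ => t + a) := (Equiv.addRight a).bijective
    have h := hinv _ hF (by intro t; rw [hd]; norm_num) hbij (x, ψ, pv, q)
    simpa [uact, hd, hdd, deriv_const', Real.one_rpow] using h
  have hpsiconst : ∀ (x : Fin n → ℝ) (ψ ψ' : ℝ) (pv : Fin n → ℝ) (q : Fin n → Fin n → ℝ),
      T (x, ψ, pv, q) = T (x, ψ', pv, q) := by
    intro x ψ ψ' pv q
    have := htrans x ψ' (ψ - ψ') pv q
    simpa using this
  -- statement 1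
  have s1 : ∀ z : J2 n, pdPsi T z = 0 := by
    intro z
    have hc : HasDerivAt (fun a : ℝ => ((z.1, z.2.1 + a, z.2.2.1, z.2.2.2) : J2 n))
        (((0 : Fin n → ℝ), (1 : ℝ), (0 : Fin n → ℝ), (0 : Fin n → Fin n → ℝ)) : J2 n) 0 :=
      (hasDerivAt_const _ _).prodMk (((hasDerivAt_id 0).const_add z.2.1).prodMk
        ((hasDerivAt_const _ _).prodMk (hasDerivAt_const _ _)))
    have hD : HasFDerivAt T (fderiv ℝ T z) ((z.1, z.2.1 + 0, z.2.2.1, z.2.2.2) : J2 n) := by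
      have hc0 : ((z.1, z.2.1 + 0, z.2.2.1, z.2.2.2) : J2 n) = z := by simp
      rw [hc0]; exact (hTd z).hasFDerivAt
    have h1 : HasDerivAt (fun a : ℝ => T (z.1, z.2.1 + a, z.2.2.1, z.2.2.2))
        (fderiv ℝ T z ((0, 1, 0, 0) : J2 n)) 0 := hD.comp_hasDerivAt 0 hc
    have h2 : HasDerivAt (fun a : ℝ => T (z.1, z.2.1 + a, z.2.2.1, z.2.2.2)) 0 0 := by
      have he : (fun a : ℝ => T (z.1, z.2.1 + a, z.2.2.1, z.2.2.2)) = fun _ => T z := by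
        funext a; rw [htrans]
      rw [he]; exact hasDerivAt_const _ _
    exact h1.unique h2
  -- statement 3 (scaling)
  have s3 : ∀ (z : J2 n) (lam : ℝ), 0 < lam →
      T (z.1, z.2.1, lam • z.2.2.1, lam • z.2.2.2) = Real.rpow lam (p - 1) * T z := by
    intro z lam hl
    have hF : ContDiff ℝ (⊤ : ℕ∞) (fun t : ℝ => lam * t) := contDiff_const.mul contDiff_id
    have hd : deriv (fun t : ℝ => lam * t) = fun _ => lam := by
      funext t; simpa using ((hasDerivAt_id t).const_mul lam).deriv
    have hdd : deriv (deriv (fun t : ℝ => lam * t)) = fun _ => 0 := by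
      rw [hd]; funext t; exact deriv_const t lam
    have hbij : Function.Bijective (fun t : ℝ => lam * t) := by
      constructor
      · exact fun a b h => by
          have := h; field_simp at this
          exact this
      · intro y; exact ⟨lam⁻¹ * y, by field_simp⟩
    have h := hinv _ hF (fun t => by rw [hd]; exact hl) hbij z
    have e1 : uact (fun t : ℝ => lam * t) z
        = ((z.1, lam * z.2.1, lam • z.2.2.1, lam • z.2.2.2) : J2 n) := by
      simp only [uact, hd, hdd, deriv_const', zero_mul, add_zero]
      rfl
    rw [e1, hd] at h
    calc T (z.1, z.2.1, lam • z.2.2.1, lam • z.2.2.2)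
        = T (z.1, lam * z.2.1, lam • z.2.2.1, lam • z.2.2.2) :=
          hpsiconst z.1 z.2.1 (lam * z.2.1) _ _
      _ = Real.rpow lam (p - 1) * T z := h
  -- symmetric-dependence lemma for the fderiv
  have hsymD : ∀ (z : J2 n) (q : Fin n → Fin n → ℝ),
      fderiv ℝ T z ((0, 0, 0, q) : J2 n) = fderiv ℝ T z ((0, 0, 0, symmM q) : J2 n) := by
    intro z q
    have hTS : ∀ w : J2 n, T w = T (SLui n w) := by
      intro w
      rw [SLui_apply]
      exact hsym w.1 w.2.1 w.2.2.1 w.2.2.2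
    have hF2 : HasFDerivAt T ((fderiv ℝ T (SLui n z)).comp (SLui n)) z := by
      have h := ((hTd (SLui n z)).hasFDerivAt).comp z (SLui n).hasFDerivAt
      exact h.congr_of_eventuallyEq (Filter.Eventually.of_forall fun w => hTS w)
    rw [hF2.fderiv]
    simp only [ContinuousLinearMap.comp_apply, SLui_apply]
    norm_num [symmM_idem]
  -- statement 2 (Euler homogeneity)
  have s2 : ∀ z : J2 n,
      (∑ μ, z.2.2.1 μ * pd1 T μ z) + (∑ μ, ∑ ν, z.2.2.2 μ ν * pd2 T μ ν z)
        = (p - 1) * T z := by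
    intro z
    have hc : HasDerivAt (fun l : ℝ => ((z.1, z.2.1, l • z.2.2.1, l • z.2.2.2) : J2 n))
        (((0 : Fin n → ℝ), (0 : ℝ), z.2.2.1, z.2.2.2) : J2 n) 1 := by
      have c3 : HasDerivAt (fun l : ℝ => l • z.2.2.1) z.2.2.1 1 := by
        simpa using (hasDerivAt_id (1 : ℝ)).smul_const z.2.2.1
      have c4 : HasDerivAt (fun l : ℝ => l • z.2.2.2) z.2.2.2 1 := by
        simpa using (hasDerivAt_id (1 : ℝ)).smul_const z.2.2.2
      exact (hasDerivAt_const _ _).prodMk ((hasDerivAt_const _ _).prodMk (c3.prodMk c4))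
    have hD : HasFDerivAt T (fderiv ℝ T z)
        ((z.1, z.2.1, (1 : ℝ) • z.2.2.1, (1 : ℝ) • z.2.2.2) : J2 n) := by
      have hc0 : ((z.1, z.2.1, (1 : ℝ) • z.2.2.1, (1 : ℝ) • z.2.2.2) : J2 n) = z := by
        simp
      rw [hc0]; exact (hTd z).hasFDerivAt
    have h1 : HasDerivAt (fun l : ℝ => T (z.1, z.2.1, l • z.2.2.1, l • z.2.2.2))
        (fderiv ℝ T z ((0, 0, z.2.2.1, z.2.2.2) : J2 n)) 1 := hD.comp_hasDerivAt 1 hc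
    have h2 : HasDerivAt (fun l : ℝ => Real.rpow l (p - 1) * T z) ((p - 1) * T z) 1 := by
      have := (Real.hasDerivAt_rpow_const (x := (1:ℝ)) (p := p - 1)
        (Or.inl one_ne_zero)).mul_const (T z)
      simpa using this
    have heq : (fun l : ℝ => T (z.1, z.2.1, l • z.2.2.1, l • z.2.2.2))
        =ᶠ[nhds (1:ℝ)] (fun l : ℝ => Real.rpow l (p - 1) * T z) := by
      filter_upwards [Ioi_mem_nhds (show (0:ℝ) < 1 by norm_num)] with l hl
      exact s3 z l hl
    have h2' : HasDerivAt (fun l : ℝ => T (z.1, z.2.1, l • z.2.2.1, l • z.2.2.2))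
        ((p - 1) * T z) 1 := h2.congr_of_eventuallyEq heq
    have key : fderiv ℝ T z ((0, 0, z.2.2.1, z.2.2.2) : J2 n) = (p - 1) * T z :=
      h1.unique h2'
    have hsplit : fderiv ℝ T z ((0, 0, z.2.2.1, z.2.2.2) : J2 n)
        = fderiv ℝ T z ((0, 0, z.2.2.1, 0) : J2 n)
          + fderiv ℝ T z ((0, 0, 0, z.2.2.2) : J2 n) := by
      rw [← map_add]
      congr 1
      simp [Prod.ext_iff]
    have e1 : (∑ μ, z.2.2.1 μ * pd1 T μ z) = fderiv ℝ T z ((0, 0, z.2.2.1, 0) : J2 n) :=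
      clm_sum_pd1 (fderiv ℝ T z) z.2.2.1
    have e2 : (∑ μ, ∑ ν, z.2.2.2 μ ν * pd2 T μ ν z)
        = fderiv ℝ T z ((0, 0, 0, z.2.2.2) : J2 n) := by
      rw [hsymD z z.2.2.2]
      exact clm_sum_pd2 (fderiv ℝ T z) z.2.2.2
    rw [e1, e2, ← hsplit, key]
  -- statement 4
  have s4 : ∀ z : J2 n, (∑ μ, ∑ ν, z.2.2.1 μ * z.2.2.1 ν * pd2 T μ ν z) = 0 := by
    intro z
    set ψ0 := z.2.1 with hψ0
    set pp : Fin n → Fin n → ℝ := fun i j => z.2.2.1 i * z.2.2.1 j with hpp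
    -- invariance under the nonlinear family
    have hkey : ∀ s : ℝ, s ∈ Set.Ioo (-1 : ℝ) 1 →
        T (z.1, z.2.1, z.2.2.1, z.2.2.2 + s • pp) = T z := by
      intro s hs
      set F : ℝ → ℝ := fun t => t + s * (1 - Real.cos (t - ψ0)) with hF_def
      have hF : ContDiff ℝ (⊤ : ℕ∞) F :=
        contDiff_id.add (contDiff_const.mul (contDiff_const.sub
          (Real.contDiff_cos.comp (contDiff_id.sub contDiff_const))))
      have hder : ∀ t : ℝ, HasDerivAt F (1 + s * Real.sin (t - ψ0)) t := by
        intro t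
        have hcos : HasDerivAt (fun t : ℝ => Real.cos (t - ψ0))
            (-Real.sin (t - ψ0) * 1) t :=
          by have h := (Real.hasDerivAt_cos (t - ψ0)).comp t ((hasDerivAt_id t).sub_const ψ0); exact h
        have h1 : HasDerivAt F (1 + s * (0 - -Real.sin (t - ψ0) * 1)) t :=
          (hasDerivAt_id t).add (((hasDerivAt_const t (1:ℝ)).sub hcos).const_mul s)
        simpa using h1
      have hd : deriv F = fun t => 1 + s * Real.sin (t - ψ0) := by
        funext t; exact (hder t).deriv
      have hpos : ∀ t : ℝ, 0 < deriv F t := by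
        intro t; rw [(hder t).deriv]
        have habs : |s * Real.sin (t - ψ0)| < 1 := by
          rw [abs_mul]
          have h1 : |Real.sin (t - ψ0)| ≤ 1 :=
            abs_le.mpr ⟨Real.neg_one_le_sin _, Real.sin_le_one _⟩
          have h2 : |s| < 1 := abs_lt.mpr ⟨hs.1, hs.2⟩
          nlinarith [abs_nonneg s, abs_nonneg (Real.sin (t - ψ0))]
        have h3 := neg_abs_le (s * Real.sin (t - ψ0))
        linarith
      have hmono : StrictMono F := strictMono_of_deriv_pos hpos
      have hsurj : Function.Surjective F := by
        refine Continuous.surjective hF.continuous ?_ ?_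
        · refine Filter.tendsto_atTop_mono (fun t => ?_)
            (Filter.tendsto_atTop_add_const_right _ (-2 : ℝ) Filter.tendsto_id)
          have h1 := Real.neg_one_le_cos (t - ψ0)
          have h2 := Real.cos_le_one (t - ψ0)
          simp only [hF_def, id_eq]
          nlinarith [mul_nonneg (by linarith [hs.1] : (0:ℝ) ≤ 1 + s)
            (by linarith : (0:ℝ) ≤ 1 - Real.cos (t - ψ0))]
        · refine Filter.tendsto_atBot_mono (fun t => ?_)
            (Filter.tendsto_atBot_add_const_right _ (2 : ℝ) Filter.tendsto_id)
          have h1 := Real.neg_one_le_cos (t - ψ0)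
          have h2 := Real.cos_le_one (t - ψ0)
          simp only [hF_def, id_eq]
          nlinarith [mul_nonneg (by linarith [hs.2] : (0:ℝ) ≤ 1 - s)
            (by linarith : (0:ℝ) ≤ 1 - Real.cos (t - ψ0))]
      have hbij : Function.Bijective F := ⟨hmono.injective, hsurj⟩
      have hdd : deriv (deriv F) ψ0 = s := by
        rw [hd]
        have hsin : ∀ t : ℝ, HasDerivAt (fun t : ℝ => Real.sin (t - ψ0))
            (Real.cos (t - ψ0) * 1) t := fun t =>
          by have h := (Real.hasDerivAt_sin (t - ψ0)).comp t ((hasDerivAt_id t).sub_const ψ0); exact h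
        have : HasDerivAt (fun t : ℝ => 1 + s * Real.sin (t - ψ0))
            (0 + s * (Real.cos (ψ0 - ψ0) * 1)) ψ0 :=
          (hasDerivAt_const ψ0 (1:ℝ)).add ((hsin ψ0).const_mul s)
        have := this.deriv
        simpa using this
      have hdψ0 : deriv F ψ0 = 1 := by rw [hd]; simp
      have hFψ0 : F ψ0 = ψ0 := by simp [hF_def]
      have h := hinv F hF hpos hbij z
      have e1 : uact F z = ((z.1, ψ0, z.2.2.1, z.2.2.2 + s • pp) : J2 n) := by
        show ((z.1, F z.2.1, fun μ => deriv F z.2.1 * z.2.2.1 μ,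
          fun μ ν => deriv F z.2.1 * z.2.2.2 μ ν
            + deriv (deriv F) z.2.1 * z.2.2.1 μ * z.2.2.1 ν) : J2 n) = _
        rw [← hψ0, hdψ0, hFψ0, hdd]
        have h4 : (fun μ ν => z.2.2.2 μ ν + s * z.2.2.1 μ * z.2.2.1 ν)
            = z.2.2.2 + s • pp := by
          funext μ ν
          simp only [hpp, Pi.add_apply, Pi.smul_apply, smul_eq_mul]
          ring
        simp only [one_mul, h4]
      have hder1 : deriv F z.2.1 = 1 := by rw [← hψ0]; exact hdψ0
      rw [e1, hder1] at h
      rw [show Real.rpow (1:ℝ) (p - 1) = 1 from Real.one_rpow _, one_mul] at h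
      exact hψ0 ▸ h
    -- differentiate at s = 0
    have hc : HasDerivAt (fun s : ℝ => ((z.1, z.2.1, z.2.2.1, z.2.2.2 + s • pp) : J2 n))
        (((0 : Fin n → ℝ), (0 : ℝ), (0 : Fin n → ℝ), pp) : J2 n) 0 := by
      have c4 : HasDerivAt (fun s : ℝ => z.2.2.2 + s • pp) pp 0 := by
        simpa using ((hasDerivAt_id (0:ℝ)).smul_const pp).const_add z.2.2.2
      exact (hasDerivAt_const _ _).prodMk ((hasDerivAt_const _ _).prodMk
        ((hasDerivAt_const _ _).prodMk c4))
    have hD : HasFDerivAt T (fderiv ℝ T z)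
        ((z.1, z.2.1, z.2.2.1, z.2.2.2 + (0:ℝ) • pp) : J2 n) := by
      have hc0 : ((z.1, z.2.1, z.2.2.1, z.2.2.2 + (0:ℝ) • pp) : J2 n) = z := by simp
      rw [hc0]; exact (hTd z).hasFDerivAt
    have h1 : HasDerivAt (fun s : ℝ => T (z.1, z.2.1, z.2.2.1, z.2.2.2 + s • pp))
        (fderiv ℝ T z ((0, 0, 0, pp) : J2 n)) 0 := hD.comp_hasDerivAt 0 hc
    have h2 : HasDerivAt (fun s : ℝ => T (z.1, z.2.1, z.2.2.1, z.2.2.2 + s • pp)) 0 0 := by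
      have h2' : HasDerivAt (fun _ : ℝ => T z) 0 0 := hasDerivAt_const _ _
      refine h2'.congr_of_eventuallyEq ?_
      filter_upwards [Ioo_mem_nhds (show (-1:ℝ) < 0 by norm_num) (show (0:ℝ) < 1 by norm_num)]
        with s hs
      exact hkey s hs
    have key : fderiv ℝ T z ((0, 0, 0, pp) : J2 n) = 0 := h1.unique h2
    have hsymm_pp : symmM pp = pp := by
      funext i j; simp [symmM, hpp]; ring
    calc (∑ μ, ∑ ν, z.2.2.1 μ * z.2.2.1 ν * pd2 T μ ν z)
        = ∑ μ, ∑ ν, pp μ ν * pd2 T μ ν z := rfl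
      _ = fderiv ℝ T z ((0, 0, 0, symmM pp) : J2 n) := clm_sum_pd2 (fderiv ℝ T z) pp
      _ = 0 := by rw [hsymm_pp, key]
  exact ⟨s1, s2, s3, s4⟩


end
end

section
/- Let T be a smooth function on J² satisfying (ADK″), i.e. ∂^μT = Σ_ν (∂/∂x^ν + ψ_ν ∂ + Σ_ρ ψ_{νρ} ∂^ρ) ∂^{μν}T for all μ. Then T automatically satisfies the scalar form of the remaining Helmholtz-type condition (ADK4): − D̃_μ(∂^μ T) + D̃_{μ₁} D̃_{μ₂}(∂^{μ₁μ₂} T) = 0, where D̃_μ := ∂/∂x^μ + ψ_μ ∂ + Σ_ν ψ_{μν} ∂^ν and summation over repeated indices is understood. -/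
open scoped BigOperators

noncomputable section

/-- Directional derivatives of a smooth function are smooth. -/
lemma smooth_dir {n : ℕ} {T : J2 n → ℝ} (hT : ContDiff ℝ (⊤ : ℕ∞) T) (v : J2 n) :
    ContDiff ℝ (⊤ : ℕ∞) (fun z => fderiv ℝ T z v) :=
  (hT.fderiv_right (mod_cast le_top)).clm_apply contDiff_const

lemma smooth_Dt {n : ℕ} {f : J2 n → ℝ} (hf : ContDiff ℝ (⊤ : ℕ∞) f) (μ : Fin n) :
    ContDiff ℝ (⊤ : ℕ∞) (Dt μ f) := by
  unfold Dt pdX pdPsi pd1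
  apply ContDiff.add
  apply ContDiff.add
  · exact smooth_dir hf _
  · exact ((contDiff_apply ℝ ℝ μ).comp
      (contDiff_fst.comp (contDiff_snd.comp contDiff_snd))).mul (smooth_dir hf _)
  · apply ContDiff.sum
    intro ν _
    exact (((contDiff_apply ℝ ℝ ν).comp ((contDiff_apply ℝ _ μ).comp
      (contDiff_snd.comp (contDiff_snd.comp contDiff_snd))))).mul (smooth_dir hf _)

lemma Dt_sum {n : ℕ} {ι : Type*} (s : Finset ι) (f : ι → J2 n → ℝ)
    (hf : ∀ i, ContDiff ℝ (⊤ : ℕ∞) (f i)) (μ : Fin n) (z : J2 n) :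
    Dt μ (fun w => ∑ i ∈ s, f i w) z = ∑ i ∈ s, Dt μ (f i) z := by
  have key : fderiv ℝ (fun w => ∑ i ∈ s, f i w) z = ∑ i ∈ s, fderiv ℝ (f i) z :=
    fderiv_fun_sum fun i _ => ((hf i).differentiable (by simp)) z
  simp only [Dt, pdX, pdPsi, pd1, key, ContinuousLinearMap.sum_apply]
  rw [Finset.sum_add_distrib, Finset.sum_add_distrib, Finset.mul_sum]
  congr 1
  rw [Finset.sum_comm]
  exact Finset.sum_congr rfl fun ν _ => Finset.mul_sum _ _ _

theorem ADK4_follows_from_ADK'' {n : ℕ} (T : J2 n → ℝ)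
    (hT : ContDiff ℝ (⊤ : ℕ∞) T) (hsym : SymmDep T) (h2 : ADKsecond T) :
    ∀ z : J2 n,
      -(∑ μ, Dt μ (pd1 T μ) z) + (∑ μ, ∑ ν, Dt μ (Dt ν (pd2 T μ ν)) z) = 0 := by
  intro z
  have key : ∀ μ, Dt μ (pd1 T μ) z = ∑ ν, Dt μ (Dt ν (pd2 T μ ν)) z := by
    intro μ
    have hfun : pd1 T μ = fun w => ∑ ν, Dt ν (pd2 T μ ν) w := funext fun w => h2 μ w
    rw [hfun]
    exact Dt_sum _ _ (fun ν => smooth_Dt (smooth_dir hT _) ν) μ z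
  rw [Finset.sum_congr rfl fun μ _ => key μ]
  exact neg_add_cancel _

end
end

section
/- Let T₀ and T^{ρσ} = T^{σρ} be smooth functions of (x^μ, ψ, ψ_μ) and let T := T₀ + Σ_{ρ,σ} T^{ρσ} ψ_{ρσ} on J² (so T is affine in the second-order variables, as is the case for equations coming from a first-order Lagrangian). Let p be a real number. Then T satisfies (ADK″) together with the universal-invariance conditions [(i) ∂T = 0; (ii) Σ ψ_μ∂^μT + Σ ψ_{μν}∂^{μν}T = (p−1)T; (iii) Σ ψ_μψ_ν∂^{μν}T = 0] if and only if: ∂T₀ = 0; ∂T^{ρσ} = 0 for all ρ,σ; T₀(x, λψ_μ) = λ^{p−1} T₀(x, ψ_μ) for all λ > 0; T^{ρσ}(x, λψ_μ) = λ^{p−2} T^{ρσ}(x, ψ_μ) for all λ > 0; Σ_{ρ,σ} ψ_ρ ψ_σ T^{ρσ} = 0; ∂^ρ T^{μν} − ∂^μ T^{ρν} = 0 for all ρ,μ,ν; and ∂^ρ T₀ = Σ_σ ∂T^{ρσ}/∂x^σ for all ρ. -/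
open scoped BigOperators

noncomputable section

def piL (n : ℕ) : J2 n →L[ℝ] J1 n :=
  (ContinuousLinearMap.fst ℝ _ _).prod
    (((ContinuousLinearMap.fst ℝ ℝ _).comp (ContinuousLinearMap.snd ℝ _ _)).prod
      ((ContinuousLinearMap.fst ℝ _ _).comp
        ((ContinuousLinearMap.snd ℝ ℝ _).comp (ContinuousLinearMap.snd ℝ _ _))))

@[simp] lemma piL_apply {n : ℕ} (z : J2 n) : piL n z = (z.1, z.2.1, z.2.2.1) := rfl

def evQ {n : ℕ} (ρ σ : Fin n) : J2 n →L[ℝ] ℝ :=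
  (ContinuousLinearMap.proj σ : (Fin n → ℝ) →L[ℝ] ℝ).comp
    ((ContinuousLinearMap.proj ρ : (Fin n → Fin n → ℝ) →L[ℝ] (Fin n → ℝ)).comp
      ((ContinuousLinearMap.snd ℝ (Fin n → ℝ) (Fin n → Fin n → ℝ)).comp
        ((ContinuousLinearMap.snd ℝ ℝ ((Fin n → ℝ) × (Fin n → Fin n → ℝ))).comp
          (ContinuousLinearMap.snd ℝ (Fin n → ℝ) (ℝ × (Fin n → ℝ) × (Fin n → Fin n → ℝ))))))

@[simp] lemma evQ_apply {n : ℕ} (ρ σ : Fin n) (z : J2 n) : evQ ρ σ z = z.2.2.2 ρ σ := rfl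

lemma clm_lin3 {n : ℕ} (L : J1 n →L[ℝ] ℝ) (u : Fin n → ℝ) :
    L ((0 : Fin n → ℝ), (0 : ℝ), u) = ∑ μ, u μ * L (0, 0, Pi.single μ 1) := by
  have hu : ((0 : Fin n → ℝ), (0 : ℝ), u)
      = ∑ μ, u μ • (((0 : Fin n → ℝ), (0 : ℝ), Pi.single μ 1) : J1 n) := by
    refine Prod.ext ?_ (Prod.ext ?_ ?_)
    · simp [Prod.fst_sum]
    · simp [Prod.fst_sum, Prod.snd_sum]
    · simp only [Prod.snd_sum, Prod.smul_mk]
      funext i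
      simp [Finset.sum_apply, Pi.single_apply]
  rw [hu, map_sum]
  simp only [map_smul, smul_eq_mul]

lemma fderiv_comp_piL {n : ℕ} (g : J1 n → ℝ) (hg : ContDiff ℝ (⊤ : ℕ∞) g) (z v : J2 n) :
    fderiv ℝ (fun z => g (piL n z)) z v = fderiv ℝ g (piL n z) (piL n v) := by
  have h : HasFDerivAt (fun z => g (piL n z))
      ((fderiv ℝ g (piL n z)).comp (piL n)) z :=
    ((hg.differentiable (by norm_num) (piL n z)).hasFDerivAt).comp z (piL n).hasFDerivAt
  rw [h.fderiv]; rfl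

lemma fderiv_master {n : ℕ} (T0 : J1 n → ℝ) (Tq : Fin n → Fin n → J1 n → ℝ)
    (h0 : ContDiff ℝ (⊤ : ℕ∞) T0) (hq : ∀ ρ σ, ContDiff ℝ (⊤ : ℕ∞) (Tq ρ σ))
    (T : J2 n → ℝ)
    (hTdef : ∀ x ψ pv q, T (x, ψ, pv, q) =
      T0 (x, ψ, pv) + ∑ ρ, ∑ σ, Tq ρ σ (x, ψ, pv) * q ρ σ)
    (z v : J2 n) :
    fderiv ℝ T z v = fderiv ℝ T0 (piL n z) (piL n v) +
      ∑ ρ, ∑ σ, (z.2.2.2 ρ σ * fderiv ℝ (Tq ρ σ) (piL n z) (piL n v)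
        + Tq ρ σ (piL n z) * v.2.2.2 ρ σ) := by
  have hTeq : T = fun z => T0 (piL n z) + ∑ ρ, ∑ σ, Tq ρ σ (piL n z) * evQ ρ σ z := by
    funext z
    obtain ⟨x, ψ, pv, q⟩ := z
    exact hTdef x ψ pv q
  have h1 : HasFDerivAt (fun z => T0 (piL n z))
      ((fderiv ℝ T0 (piL n z)).comp (piL n)) z :=
    ((h0.differentiable (by norm_num) (piL n z)).hasFDerivAt).comp z (piL n).hasFDerivAt
  have h2 : ∀ ρ σ : Fin n, HasFDerivAt (fun z => Tq ρ σ (piL n z) * evQ ρ σ z)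
      (Tq ρ σ (piL n z) • evQ ρ σ
        + evQ ρ σ z • ((fderiv ℝ (Tq ρ σ) (piL n z)).comp (piL n))) z := by
    intro ρ σ
    have ha : HasFDerivAt (fun z => Tq ρ σ (piL n z))
        ((fderiv ℝ (Tq ρ σ) (piL n z)).comp (piL n)) z :=
      (((hq ρ σ).differentiable (by norm_num) (piL n z)).hasFDerivAt).comp z
        (piL n).hasFDerivAt
    have hb := (evQ ρ σ).hasFDerivAt (x := z)
    exact ha.mul hb
  have hD : HasFDerivAt T
      (((fderiv ℝ T0 (piL n z)).comp (piL n)) +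
        ∑ ρ, ∑ σ, (Tq ρ σ (piL n z) • evQ ρ σ
          + evQ ρ σ z • ((fderiv ℝ (Tq ρ σ) (piL n z)).comp (piL n)))) z := by
    rw [hTeq]
    exact h1.add (HasFDerivAt.fun_sum fun ρ _ => HasFDerivAt.fun_sum fun σ _ => h2 ρ σ)
  rw [hD.fderiv]
  simp [ContinuousLinearMap.sum_apply, smul_eq_mul, add_comm]

section ops
variable {n : ℕ} (T0 : J1 n → ℝ) (Tq : Fin n → Fin n → J1 n → ℝ)
variable (h0 : ContDiff ℝ (⊤ : ℕ∞) T0) (hq : ∀ ρ σ, ContDiff ℝ (⊤ : ℕ∞) (Tq ρ σ))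
variable (hqsym : ∀ ρ σ, Tq ρ σ = Tq σ ρ)
variable (T : J2 n → ℝ)
variable (hTdef : ∀ x ψ pv q, T (x, ψ, pv, q) =
      T0 (x, ψ, pv) + ∑ ρ, ∑ σ, Tq ρ σ (x, ψ, pv) * q ρ σ)

include h0 hq hTdef

lemma pdPsi_T (z : J2 n) : pdPsi T z =
    pdPsi1 T0 (piL n z) + ∑ ρ, ∑ σ, z.2.2.2 ρ σ * pdPsi1 (Tq ρ σ) (piL n z) := by
  have := fderiv_master T0 Tq h0 hq T hTdef z (0, 1, 0, 0)
  simpa [pdPsi, pdPsi1] using this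

lemma pdX_T (μ : Fin n) (z : J2 n) : pdX T μ z =
    pdX1 T0 μ (piL n z) + ∑ ρ, ∑ σ, z.2.2.2 ρ σ * pdX1 (Tq ρ σ) μ (piL n z) := by
  have := fderiv_master T0 Tq h0 hq T hTdef z (Pi.single μ 1, 0, 0, 0)
  simpa [pdX, pdX1] using this

lemma pd1_T (μ : Fin n) (z : J2 n) : pd1 T μ z =
    pd11 T0 μ (piL n z) + ∑ ρ, ∑ σ, z.2.2.2 ρ σ * pd11 (Tq ρ σ) μ (piL n z) := by
  have := fderiv_master T0 Tq h0 hq T hTdef z (0, 0, Pi.single μ 1, 0)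
  simpa [pd1, pd11] using this

include hqsym in
lemma pd2_T (μ ν : Fin n) (z : J2 n) : pd2 T μ ν z = Tq μ ν (piL n z) := by
  have hm := fderiv_master T0 Tq h0 hq T hTdef z (0, 0, 0, symE μ ν)
  have hz : ((0, 0, 0) : J1 n) = 0 := rfl
  have hs : ∀ B : Fin n → Fin n → ℝ, ∑ ρ, ∑ σ, B ρ σ * symE μ ν ρ σ = (B μ ν + B ν μ) / 2 := by
    intro B
    have he : ∀ ρ σ, B ρ σ * symE μ ν ρ σ =
        (if ρ = μ ∧ σ = ν then B ρ σ else 0) / 2 + (if ρ = ν ∧ σ = μ then B ρ σ else 0) / 2 := by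
      intro ρ σ
      unfold symE
      split_ifs <;> ring
    simp only [he, Finset.sum_add_distrib, ← Finset.sum_div]
    simp [ite_and, Finset.sum_ite_eq']
    ring
  simp only [pd2, hm, piL_apply, hz, map_zero, mul_zero, zero_add]
  rw [hs fun ρ σ => Tq ρ σ (z.1, z.2.1, z.2.2.1)]
  rw [show Tq ν μ = Tq μ ν from hqsym ν μ]
  ring

include hqsym in
lemma pd2_T_fun (μ ν : Fin n) : pd2 T μ ν = fun z => Tq μ ν (piL n z) :=
  funext fun z => pd2_T T0 Tq h0 hq hqsym T hTdef μ ν z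

end ops

lemma Dt_comp {n : ℕ} (g : J1 n → ℝ) (hg : ContDiff ℝ (⊤ : ℕ∞) g) (ν : Fin n) (z : J2 n) :
    Dt ν (fun z => g (piL n z)) z =
      pdX1 g ν (piL n z) + z.2.2.1 ν * pdPsi1 g (piL n z) +
        ∑ ρ, z.2.2.2 ν ρ * pd11 g ρ (piL n z) := by
  unfold Dt pdX pdPsi pd1 pdX1 pdPsi1 pd11
  simp only [fderiv_comp_piL g hg]
  rfl

lemma curve_hasDerivAt {n : ℕ} (f : J1 n → ℝ) (hf : ContDiff ℝ (⊤ : ℕ∞) f)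
    (x : Fin n → ℝ) (ψ : ℝ) (pv : Fin n → ℝ) (s : ℝ → ℝ) (s' t : ℝ)
    (hs : HasDerivAt s s' t) :
    HasDerivAt (fun lam => f (x, ψ, s lam • pv))
      (fderiv ℝ f (x, ψ, s t • pv) ((0 : Fin n → ℝ), (0 : ℝ), s' • pv)) t := by
  have hγ : HasDerivAt (fun lam => ((x, ψ, s lam • pv) : J1 n))
      (((0 : Fin n → ℝ), (0 : ℝ), s' • pv)) t :=
    HasDerivAt.prodMk (hasDerivAt_const t x) (HasDerivAt.prodMk (hasDerivAt_const t ψ) (hs.smul_const pv))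
  exact ((hf.differentiable (by norm_num) _).hasFDerivAt).comp_hasDerivAt t hγ

lemma euler_of_homog {n : ℕ} (f : J1 n → ℝ) (hf : ContDiff ℝ (⊤ : ℕ∞) f) (c : ℝ)
    (h : ∀ (x : Fin n → ℝ) (ψ : ℝ) (pv : Fin n → ℝ) (lam : ℝ), 0 < lam →
      f (x, ψ, lam • pv) = Real.rpow lam c * f (x, ψ, pv)) :
    ∀ w : J1 n, (∑ μ, w.2.2 μ * pd11 f μ w) = c * f w := by
  rintro ⟨x, ψ, pv⟩
  have h1 : HasDerivAt (fun lam : ℝ => f (x, ψ, lam • pv))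
      (fderiv ℝ f (x, ψ, pv) ((0 : Fin n → ℝ), (0 : ℝ), pv)) 1 := by
    have := curve_hasDerivAt f hf x ψ pv (fun a => a) 1 1 (hasDerivAt_id 1)
    simpa using this
  have h2 : HasDerivAt (fun lam : ℝ => Real.rpow lam c * f (x, ψ, pv))
      (c * f (x, ψ, pv)) 1 := by
    have := (Real.hasDerivAt_rpow_const (x := (1:ℝ)) (p := c)
      (Or.inl one_ne_zero)).mul_const (f (x, ψ, pv))
    simpa [Real.one_rpow] using this
  have hEq : (fun lam => f (x, ψ, lam • pv))
      =ᶠ[nhds (1:ℝ)] fun lam : ℝ => Real.rpow lam c * f (x, ψ, pv) := by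
    filter_upwards [isOpen_Ioi.mem_nhds (show (0:ℝ) < 1 by norm_num)] with lam hlam
    exact h x ψ pv lam hlam
  have h2' := h2.congr_of_eventuallyEq hEq
  have huniq := h1.unique h2'
  calc (∑ μ, pv μ * pd11 f μ (x, ψ, pv))
      = fderiv ℝ f (x, ψ, pv) ((0 : Fin n → ℝ), (0 : ℝ), pv) := (clm_lin3 _ pv).symm
    _ = c * f (x, ψ, pv) := huniq

lemma homog_of_euler {n : ℕ} (f : J1 n → ℝ) (hf : ContDiff ℝ (⊤ : ℕ∞) f) (c : ℝ)
    (h : ∀ w : J1 n, (∑ μ, w.2.2 μ * pd11 f μ w) = c * f w) :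
    ∀ (x : Fin n → ℝ) (ψ : ℝ) (pv : Fin n → ℝ) (lam : ℝ), 0 < lam →
      f (x, ψ, lam • pv) = Real.rpow lam c * f (x, ψ, pv) := by
  intro x ψ pv lam hlam
  set H : ℝ → ℝ := fun t => f (x, ψ, Real.exp t • pv) * Real.exp (-(c * t)) with hH
  have hD : ∀ t, HasDerivAt H 0 t := by
    intro t
    have h1 : HasDerivAt (fun s => f (x, ψ, Real.exp s • pv))
        (c * f (x, ψ, Real.exp t • pv)) t := by
      have hc := curve_hasDerivAt f hf x ψ pv Real.exp (Real.exp t) t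
        (Real.hasDerivAt_exp t)
      have hval : fderiv ℝ f (x, ψ, Real.exp t • pv)
          ((0 : Fin n → ℝ), (0 : ℝ), Real.exp t • pv) = c * f (x, ψ, Real.exp t • pv) := by
        rw [clm_lin3]
        have := h (x, ψ, Real.exp t • pv)
        simpa [pd11] using this
      rwa [hval] at hc
    have h2 : HasDerivAt (fun t : ℝ => Real.exp (-(c * t)))
        (Real.exp (-(c * t)) * (-c)) t := by
      have hin : HasDerivAt (fun t : ℝ => -(c * t)) (-c) t := by
        simpa [Pi.neg_def] using ((hasDerivAt_id t).const_mul c).neg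
      exact hin.exp
    have := h1.fun_mul h2
    exact this.congr_deriv (by ring)
  have hconst : ∀ a b : ℝ, H a = H b :=
    is_const_of_deriv_eq_zero (fun t => (hD t).differentiableAt) (fun t => (hD t).deriv)
  have hkey := hconst (Real.log lam) 0
  rw [hH] at hkey
  simp only [Real.exp_log hlam, mul_zero, neg_zero, Real.exp_zero, mul_one, one_smul] at hkey
  rw [show Real.rpow lam c = lam ^ c from rfl, Real.rpow_def_of_pos hlam]
  have hone : Real.exp (Real.log lam * c) * Real.exp (-(c * Real.log lam)) = 1 := by
    rw [← Real.exp_add]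
    rw [show Real.log lam * c + -(c * Real.log lam) = 0 by ring]
    exact Real.exp_zero
  calc f (x, ψ, lam • pv)
      = Real.exp (Real.log lam * c) * Real.exp (-(c * Real.log lam)) * f (x, ψ, lam • pv) := by
        rw [hone, one_mul]
    _ = Real.exp (Real.log lam * c) * f (x, ψ, pv) := by
        rw [mul_assoc, mul_comm (Real.exp (-(c * Real.log lam))), hkey]

lemma affine_coeff {n : ℕ} {A A' : ℝ} {B B' : Fin n → Fin n → ℝ}
    (h : ∀ q : Fin n → Fin n → ℝ,
      A + ∑ ρ, ∑ σ, q ρ σ * B ρ σ = A' + ∑ ρ, ∑ σ, q ρ σ * B' ρ σ) :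
    A = A' ∧ ∀ a b, B a b = B' a b := by
  have h0 := h 0
  simp only [Pi.zero_apply, zero_mul, Finset.sum_const_zero, add_zero] at h0
  refine ⟨h0, fun a b => ?_⟩
  have h1 := h (fun i j => if i = a ∧ j = b then 1 else 0)
  simp [ite_and, ite_mul, Finset.sum_ite_eq'] at h1
  linarith

lemma sum3_swap {n : ℕ} (pv : Fin n → ℝ) (q : Fin n → Fin n → ℝ)
    (c : Fin n → Fin n → Fin n → ℝ) :
    ∑ μ, pv μ * (∑ ρ, ∑ σ, q ρ σ * c μ ρ σ) = ∑ ρ, ∑ σ, q ρ σ * (∑ μ, pv μ * c μ ρ σ) := by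
  calc ∑ μ, pv μ * (∑ ρ, ∑ σ, q ρ σ * c μ ρ σ)
      = ∑ μ, ∑ ρ, ∑ σ, pv μ * (q ρ σ * c μ ρ σ) := by simp only [Finset.mul_sum]
    _ = ∑ ρ, ∑ μ, ∑ σ, pv μ * (q ρ σ * c μ ρ σ) := Finset.sum_comm
    _ = ∑ ρ, ∑ σ, ∑ μ, pv μ * (q ρ σ * c μ ρ σ) :=
        Finset.sum_congr rfl fun ρ _ => Finset.sum_comm
    _ = ∑ ρ, ∑ σ, q ρ σ * (∑ μ, pv μ * c μ ρ σ) := by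
        refine Finset.sum_congr rfl fun ρ _ => Finset.sum_congr rfl fun σ _ => ?_
        rw [Finset.mul_sum]
        exact Finset.sum_congr rfl fun μ _ => by ring

theorem first_order_universal_invariance {n : ℕ} (T0 : J1 n → ℝ)
    (Tq : Fin n → Fin n → J1 n → ℝ)
    (h0 : ContDiff ℝ (⊤ : ℕ∞) T0) (hq : ∀ ρ σ, ContDiff ℝ (⊤ : ℕ∞) (Tq ρ σ))
    (hqsym : ∀ ρ σ, Tq ρ σ = Tq σ ρ) (p : ℝ) (T : J2 n → ℝ)
    (hTdef : ∀ x ψ pv q, T (x, ψ, pv, q) =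
      T0 (x, ψ, pv) + ∑ ρ, ∑ σ, Tq ρ σ (x, ψ, pv) * q ρ σ) :
    (ADKsecond T ∧ (∀ z : J2 n, pdPsi T z = 0) ∧
      (∀ z : J2 n,
        (∑ μ, z.2.2.1 μ * pd1 T μ z) + (∑ μ, ∑ ν, z.2.2.2 μ ν * pd2 T μ ν z) =
          (p - 1) * T z) ∧
      (∀ z : J2 n, (∑ μ, ∑ ν, z.2.2.1 μ * z.2.2.1 ν * pd2 T μ ν z) = 0)) ↔
    ((∀ w, pdPsi1 T0 w = 0) ∧
      (∀ ρ σ w, pdPsi1 (Tq ρ σ) w = 0) ∧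
      (∀ (x : Fin n → ℝ) (ψ : ℝ) (pv : Fin n → ℝ) (lam : ℝ), 0 < lam →
        T0 (x, ψ, lam • pv) = Real.rpow lam (p - 1) * T0 (x, ψ, pv)) ∧
      (∀ (ρ σ : Fin n) (x : Fin n → ℝ) (ψ : ℝ) (pv : Fin n → ℝ) (lam : ℝ), 0 < lam →
        Tq ρ σ (x, ψ, lam • pv) = Real.rpow lam (p - 2) * Tq ρ σ (x, ψ, pv)) ∧
      (∀ w : J1 n, (∑ ρ, ∑ σ, w.2.2 ρ * w.2.2 σ * Tq ρ σ w) = 0) ∧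
      (∀ (ρ μ ν : Fin n) (w : J1 n), pd11 (Tq μ ν) ρ w - pd11 (Tq ρ ν) μ w = 0) ∧
      (∀ (ρ : Fin n) (w : J1 n), pd11 T0 ρ w = ∑ σ, pdX1 (Tq ρ σ) σ w)) := by
  have hpd1 := pd1_T T0 Tq h0 hq T hTdef
  have hpdPsi := pdPsi_T T0 Tq h0 hq T hTdef
  have hpd2 := pd2_T T0 Tq h0 hq hqsym T hTdef
  have hpd2f := pd2_T_fun T0 Tq h0 hq hqsym T hTdef
  have hDt : ∀ (a b ν : Fin n) (z : J2 n), Dt ν (fun z => Tq a b (piL n z)) z =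
      pdX1 (Tq a b) ν (piL n z) + z.2.2.1 ν * pdPsi1 (Tq a b) (piL n z) +
        ∑ ρ, z.2.2.2 ν ρ * pd11 (Tq a b) ρ (piL n z) :=
    fun a b => Dt_comp (Tq a b) (hq a b)
  constructor
  · rintro ⟨hADK, hB, hC, hD⟩
    -- (i),(ii)
    have hpsi : ∀ (x : Fin n → ℝ) (ψ : ℝ) (pv : Fin n → ℝ),
        pdPsi1 T0 (x, ψ, pv) = 0 ∧ ∀ a b, pdPsi1 (Tq a b) (x, ψ, pv) = 0 := by
      intro x ψ pv
      have h : ∀ q : Fin n → Fin n → ℝ,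
          pdPsi1 T0 (x, ψ, pv) + ∑ ρ, ∑ σ, q ρ σ * pdPsi1 (Tq ρ σ) (x, ψ, pv)
            = 0 + ∑ ρ, ∑ σ, q ρ σ * (0 : ℝ) := by
        intro q
        have hz := hB (x, ψ, pv, q)
        rw [hpdPsi] at hz
        simpa using hz
      exact affine_coeff h
    -- Euler identities from (iii)
    have hCq : ∀ (x : Fin n → ℝ) (ψ : ℝ) (pv : Fin n → ℝ) (q : Fin n → Fin n → ℝ),
        (∑ μ, pv μ * (pd11 T0 μ (x, ψ, pv) +
          ∑ ρ, ∑ σ, q ρ σ * pd11 (Tq ρ σ) μ (x, ψ, pv))) +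
          (∑ μ, ∑ ν, q μ ν * Tq μ ν (x, ψ, pv)) =
          (p - 1) * (T0 (x, ψ, pv) + ∑ ρ, ∑ σ, Tq ρ σ (x, ψ, pv) * q ρ σ) := by
      intro x ψ pv q
      have hz := hC (x, ψ, pv, q)
      simp only [hpd1, hpd2, hTdef, piL_apply] at hz
      exact hz
    have heuler0 : ∀ (x : Fin n → ℝ) (ψ : ℝ) (pv : Fin n → ℝ),
        (∑ μ, pv μ * pd11 T0 μ (x, ψ, pv)) = (p - 1) * T0 (x, ψ, pv) := by
      intro x ψ pv
      have h := hCq x ψ pv 0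
      simpa using h
    have heulerq : ∀ (a b : Fin n) (x : Fin n → ℝ) (ψ : ℝ) (pv : Fin n → ℝ),
        (∑ μ, pv μ * pd11 (Tq a b) μ (x, ψ, pv)) = (p - 2) * Tq a b (x, ψ, pv) := by
      intro a b x ψ pv
      have h := hCq x ψ pv (fun i j => if i = a ∧ j = b then 1 else 0)
      simp [ite_and, ite_mul, mul_ite, Finset.sum_ite_eq', mul_add,
        Finset.sum_add_distrib] at h
      have h0' := heuler0 x ψ pv
      linarith
    -- ADK extraction
    have hADKq : ∀ (μ : Fin n) (x : Fin n → ℝ) (ψ : ℝ) (pv : Fin n → ℝ)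
        (q : Fin n → Fin n → ℝ),
        pd11 T0 μ (x, ψ, pv) + ∑ ρ, ∑ σ, q ρ σ * pd11 (Tq ρ σ) μ (x, ψ, pv) =
          ∑ ν, (pdX1 (Tq μ ν) ν (x, ψ, pv) + pv ν * pdPsi1 (Tq μ ν) (x, ψ, pv) +
            ∑ ρ, q ν ρ * pd11 (Tq μ ν) ρ (x, ψ, pv)) := by
      intro μ x ψ pv q
      have hz := hADK μ (x, ψ, pv, q)
      simp only [hpd1, hpd2f, hDt] at hz
      simp only [piL_apply] at hz
      exact hz
    have hconstADK : ∀ (μ : Fin n) (x : Fin n → ℝ) (ψ : ℝ) (pv : Fin n → ℝ),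
        pd11 T0 μ (x, ψ, pv) =
          ∑ ν, (pdX1 (Tq μ ν) ν (x, ψ, pv) + pv ν * pdPsi1 (Tq μ ν) (x, ψ, pv)) := by
      intro μ x ψ pv
      have h := hADKq μ x ψ pv 0
      simpa [Finset.sum_add_distrib] using h
    have hswap : ∀ (a b μ : Fin n) (x : Fin n → ℝ) (ψ : ℝ) (pv : Fin n → ℝ),
        pd11 (Tq a b) μ (x, ψ, pv) = pd11 (Tq μ a) b (x, ψ, pv) := by
      intro a b μ x ψ pv
      have h1 := hADKq μ x ψ pv (fun i j => if i = a ∧ j = b then 1 else 0)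
      have h2 := hADKq μ x ψ pv 0
      simp [ite_and, ite_mul, mul_ite, Finset.sum_ite_eq', Finset.sum_add_distrib] at h1 h2
      linarith
    refine ⟨fun w => (hpsi w.1 w.2.1 w.2.2).1, fun ρ σ w => (hpsi w.1 w.2.1 w.2.2).2 ρ σ,
      homog_of_euler T0 h0 (p - 1) (fun w => heuler0 w.1 w.2.1 w.2.2),
      fun ρ σ => homog_of_euler (Tq ρ σ) (hq ρ σ) (p - 2)
        (fun w => heulerq ρ σ w.1 w.2.1 w.2.2), ?_, ?_, ?_⟩
    · rintro ⟨x, ψ, pv⟩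
      have hz := hD (x, ψ, pv, 0)
      simp only [hpd2, piL_apply] at hz
      exact hz
    · rintro ρ μ ν ⟨x, ψ, pv⟩
      rw [sub_eq_zero]
      calc pd11 (Tq μ ν) ρ (x, ψ, pv) = pd11 (Tq ρ μ) ν (x, ψ, pv) := hswap μ ν ρ x ψ pv
        _ = pd11 (Tq μ ρ) ν (x, ψ, pv) := by rw [hqsym ρ μ]
        _ = pd11 (Tq ρ ν) μ (x, ψ, pv) := (hswap ρ ν μ x ψ pv).symm
    · rintro ρ ⟨x, ψ, pv⟩
      have h := hconstADK ρ x ψ pv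
      have h2 := (hpsi x ψ pv).2
      simp only [h2, mul_zero, add_zero] at h
      exact h
  · rintro ⟨r1, r2, r3, r4, r5, r6, r7⟩
    have eT0 := euler_of_homog T0 h0 (p - 1) r3
    have eTq : ∀ a b, ∀ w : J1 n,
        (∑ μ, w.2.2 μ * pd11 (Tq a b) μ w) = (p - 2) * Tq a b w :=
      fun a b => euler_of_homog (Tq a b) (hq a b) (p - 2) (r4 a b)
    have hswap2 : ∀ (a b c : Fin n) (w : J1 n),
        pd11 (Tq a b) c w = pd11 (Tq c a) b w := by
      intro a b c w
      have h1 := sub_eq_zero.mp (r6 c a b w)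
      have h2 := sub_eq_zero.mp (r6 a b c w)
      rw [h1, hqsym c b, h2, hqsym a c]
    refine ⟨?_, ?_, ?_, ?_⟩
    · intro μ z
      obtain ⟨x, ψ, pv, q⟩ := z
      simp only [hpd1, hpd2f, hDt]
      simp only [piL_apply, r2, mul_zero, add_zero]
      rw [Finset.sum_add_distrib]
      congr 1
      · exact r7 μ (x, ψ, pv)
      · refine Finset.sum_congr rfl fun a _ => Finset.sum_congr rfl fun b _ => ?_
        congr 1
        exact hswap2 a b μ (x, ψ, pv)
    · intro z
      obtain ⟨x, ψ, pv, q⟩ := z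
      rw [hpdPsi]
      simp [r1, r2]
    · intro z
      obtain ⟨x, ψ, pv, q⟩ := z
      simp only [hpd1, hpd2, hTdef, piL_apply]
      simp only [mul_add, Finset.sum_add_distrib]
      rw [sum3_swap pv q (fun μ ρ σ => pd11 (Tq ρ σ) μ (x, ψ, pv))]
      have e1 : (∑ μ, pv μ * pd11 T0 μ (x, ψ, pv)) = (p - 1) * T0 (x, ψ, pv) :=
        eT0 (x, ψ, pv)
      have e2 : ∀ ρ σ, (∑ μ, pv μ * pd11 (Tq ρ σ) μ (x, ψ, pv)) =
          (p - 2) * Tq ρ σ (x, ψ, pv) := fun ρ σ => eTq ρ σ (x, ψ, pv)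
      rw [e1]
      simp only [e2]
      rw [add_assoc, ← Finset.sum_add_distrib, Finset.mul_sum]
      congr 1
      refine Finset.sum_congr rfl fun ρ _ => ?_
      rw [← Finset.sum_add_distrib, Finset.mul_sum]
      refine Finset.sum_congr rfl fun σ _ => ?_
      ring
    · intro z
      obtain ⟨x, ψ, pv, q⟩ := z
      simp only [hpd2, piL_apply]
      exact r5 (x, ψ, pv)


end
end
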